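/- arXiv:2603.08226 — 13 statements merged into one kernel-verified Lean document; each statement's English description precedes it below -/
import Mathlib

section
/- Let 0 < C < 1 and t ∈ ℝ. Define the points P(t) = (2tC²/(2C²+t²), t²/(2C²+t²)), H(t) = (2t/(2−C²+t²), (−C²+t²)/(2−C²+t²)), and F = (0, C²/(2−C²)), all lying in the open unit disk. Then dist_BCK(H(t), P(t)) = dist_BCK(P(t), F), and both are equal to arcosh( (C²(2−C²) + (1−C²)t²) / (2C·√((1−C²)(C² + (1−C²)t²)) ) ). (This is the focal distance property of the hyperbolic elliptic parabola x²/C² + 2y² − 2y = 0: its points are equidistant from the focus F and from the directrix horocycle x² + (y−1)((2−C²)y + C²) = 0.) -/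
noncomputable def arcosh (x : ℝ) : ℝ := Real.log (x + Real.sqrt (x ^ 2 - 1))

/-- The Beltrami--Cayley--Klein model distance between two points of the open unit disk. -/
noncomputable def distBCK (p q : ℝ × ℝ) : ℝ :=
  arcosh ((1 - p.1 * q.1 - p.2 * q.2) /
    (Real.sqrt (1 - p.1 ^ 2 - p.2 ^ 2) * Real.sqrt (1 - q.1 ^ 2 - q.2 ^ 2)))

set_option maxHeartbeats 2000000 in
theorem focal_distance_property (C t : ℝ) (hC0 : 0 < C) (hC1 : C < 1)
    (P : ℝ × ℝ) (hP : P = (2 * t * C ^ 2 / (2 * C ^ 2 + t ^ 2), t ^ 2 / (2 * C ^ 2 + t ^ 2)))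
    (H : ℝ × ℝ) (hH : H = (2 * t / (2 - C ^ 2 + t ^ 2), (-C ^ 2 + t ^ 2) / (2 - C ^ 2 + t ^ 2)))
    (F : ℝ × ℝ) (hF : F = (0, C ^ 2 / (2 - C ^ 2))) :
    (P.1 ^ 2 + P.2 ^ 2 < 1 ∧ H.1 ^ 2 + H.2 ^ 2 < 1 ∧ F.1 ^ 2 + F.2 ^ 2 < 1) ∧
    distBCK H P = distBCK P F ∧
    distBCK P F =
      arcosh ((C ^ 2 * (2 - C ^ 2) + (1 - C ^ 2) * t ^ 2) /
        (2 * C * Real.sqrt ((1 - C ^ 2) * (C ^ 2 + (1 - C ^ 2) * t ^ 2)))) := by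
  subst hP hH hF
  have hC2 : C ^ 2 < 1 := by nlinarith
  have hDP : (0:ℝ) < 2 * C ^ 2 + t ^ 2 := by positivity
  have hDH : (0:ℝ) < 2 - C ^ 2 + t ^ 2 := by nlinarith [sq_nonneg t]
  have hDF : (0:ℝ) < 2 - C ^ 2 := by nlinarith
  have hX : (0:ℝ) < C ^ 2 + (1 - C ^ 2) * t ^ 2 := by nlinarith [sq_nonneg t]
  have hb : (0:ℝ) < 1 - C ^ 2 := by nlinarith
  set a := Real.sqrt (C ^ 2 + (1 - C ^ 2) * t ^ 2) with ha
  set b := Real.sqrt (1 - C ^ 2) with hbdef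
  have ha0 : 0 < a := Real.sqrt_pos.mpr hX
  have hb0 : 0 < b := Real.sqrt_pos.mpr hb
  have ha2 : a ^ 2 = C ^ 2 + (1 - C ^ 2) * t ^ 2 := Real.sq_sqrt hX.le
  have hb2 : b ^ 2 = 1 - C ^ 2 := Real.sq_sqrt hb.le
  have hDP' : (2 * C ^ 2 + t ^ 2) ≠ 0 := hDP.ne'
  have hDH' : (2 - C ^ 2 + t ^ 2) ≠ 0 := hDH.ne'
  have hDF' : (2 - C ^ 2) ≠ 0 := hDF.ne'
  -- sqrt formulas
  have hsP : Real.sqrt (1 - (2 * t * C ^ 2 / (2 * C ^ 2 + t ^ 2)) ^ 2 -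
      (t ^ 2 / (2 * C ^ 2 + t ^ 2)) ^ 2) = 2 * C * a / (2 * C ^ 2 + t ^ 2) := by
    rw [show 1 - (2 * t * C ^ 2 / (2 * C ^ 2 + t ^ 2)) ^ 2 -
        (t ^ 2 / (2 * C ^ 2 + t ^ 2)) ^ 2 = (2 * C * a / (2 * C ^ 2 + t ^ 2)) ^ 2 by
      field_simp
      nlinarith [ha2]]
    exact Real.sqrt_sq (by positivity)
  have hsH : Real.sqrt (1 - (2 * t / (2 - C ^ 2 + t ^ 2)) ^ 2 -
      ((-C ^ 2 + t ^ 2) / (2 - C ^ 2 + t ^ 2)) ^ 2) = 2 * b / (2 - C ^ 2 + t ^ 2) := by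
    rw [show 1 - (2 * t / (2 - C ^ 2 + t ^ 2)) ^ 2 -
        ((-C ^ 2 + t ^ 2) / (2 - C ^ 2 + t ^ 2)) ^ 2 = (2 * b / (2 - C ^ 2 + t ^ 2)) ^ 2 by
      field_simp
      nlinarith [hb2]]
    exact Real.sqrt_sq (by positivity)
  have hsF : Real.sqrt (1 - (0:ℝ) ^ 2 - (C ^ 2 / (2 - C ^ 2)) ^ 2) = 2 * b / (2 - C ^ 2) := by
    rw [show 1 - (0:ℝ) ^ 2 - (C ^ 2 / (2 - C ^ 2)) ^ 2 = (2 * b / (2 - C ^ 2)) ^ 2 by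
      field_simp
      nlinarith [hb2]]
    exact Real.sqrt_sq (by positivity)
  refine ⟨⟨?_, ?_, ?_⟩, ?_, ?_⟩
  · have : (0:ℝ) < 1 - (2 * t * C ^ 2 / (2 * C ^ 2 + t ^ 2)) ^ 2 -
        (t ^ 2 / (2 * C ^ 2 + t ^ 2)) ^ 2 := by
      rw [show 1 - (2 * t * C ^ 2 / (2 * C ^ 2 + t ^ 2)) ^ 2 -
          (t ^ 2 / (2 * C ^ 2 + t ^ 2)) ^ 2 = (2 * C * a / (2 * C ^ 2 + t ^ 2)) ^ 2 by
        field_simp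
        nlinarith [ha2]]
      positivity
    simp only [Prod.fst, Prod.snd] at this ⊢
    linarith
  · have : (0:ℝ) < 1 - (2 * t / (2 - C ^ 2 + t ^ 2)) ^ 2 -
        ((-C ^ 2 + t ^ 2) / (2 - C ^ 2 + t ^ 2)) ^ 2 := by
      rw [show 1 - (2 * t / (2 - C ^ 2 + t ^ 2)) ^ 2 -
          ((-C ^ 2 + t ^ 2) / (2 - C ^ 2 + t ^ 2)) ^ 2 = (2 * b / (2 - C ^ 2 + t ^ 2)) ^ 2 by
        field_simp
        nlinarith [hb2]]
      positivity
    simp only [Prod.fst, Prod.snd] at this ⊢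
    linarith
  · have : (0:ℝ) < 1 - (0:ℝ) ^ 2 - (C ^ 2 / (2 - C ^ 2)) ^ 2 := by
      rw [show 1 - (0:ℝ) ^ 2 - (C ^ 2 / (2 - C ^ 2)) ^ 2 = (2 * b / (2 - C ^ 2)) ^ 2 by
        field_simp
        nlinarith [hb2]]
      positivity
    simp only [Prod.fst, Prod.snd] at this ⊢
    linarith
  · unfold distBCK
    congr 1
    simp only [Prod.fst, Prod.snd]
    rw [hsH, hsP, hsF]
    field_simp
    ring
  · unfold distBCK
    congr 1
    simp only [Prod.fst, Prod.snd]
    rw [hsP, hsF, Real.sqrt_mul hb.le, ← hbdef, ← ha]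
    field_simp
    ring
end

section
/- Let 0 < C < 1 and 0 ≤ η < 1. Then ∫₀^η ∫_{−C√(1−y²)}^{C√(1−y²)} (1 − x² − y²)^{−3/2} dx dy = (2C/√(1−C²)) · artanh η. Equivalently, the hyperbolic area of the distance-band segment B^C_η = {(x,y) : x²/C² + y² ≤ 1, 0 ≤ y ≤ η} is (2C/√(1−C²)) artanh η. -/
noncomputable def artanh (x : ℝ) : ℝ := Real.log ((1 + x) / (1 - x)) / 2

lemma inner_int (C : ℝ) (hC0 : 0 < C) (hC1 : C < 1) (y : ℝ) (hy2 : y^2 < 1) :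
    (∫ x in (-(C * Real.sqrt (1 - y ^ 2)))..(C * Real.sqrt (1 - y ^ 2)),
        (1 - x ^ 2 - y ^ 2) ^ (-(3:ℝ)/2))
      = 2 * C / (Real.sqrt (1 - C ^ 2) * (1 - y ^ 2)) := by
  set b := 1 - y ^ 2 with hb
  have hbpos : 0 < b := by simpa [hb] using sub_pos.mpr hy2
  set a := C * Real.sqrt b with ha
  have hapos : 0 < a := mul_pos hC0 (Real.sqrt_pos.mpr hbpos)
  have ha2 : a ^ 2 = C ^ 2 * b := by
    rw [ha, mul_pow, Real.sq_sqrt hbpos.le]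
  have hC2 : C ^ 2 < 1 := by nlinarith
  have key : ∀ x ∈ Set.uIcc (-a) a, 0 < 1 - x ^ 2 - y ^ 2 := by
    intro x hx
    rw [Set.uIcc_of_le (by linarith)] at hx
    have hx2 : x ^ 2 ≤ a ^ 2 := sq_le_sq' hx.1 hx.2
    nlinarith
  have hderiv : ∀ x ∈ Set.uIcc (-a) a,
      HasDerivAt (fun x => x / (b * Real.sqrt (1 - x ^ 2 - y ^ 2)))
        ((1 - x ^ 2 - y ^ 2) ^ (-(3:ℝ)/2)) x := by
    intro x hx
    have ht : 0 < 1 - x ^ 2 - y ^ 2 := key x hx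
    have hs : 0 < Real.sqrt (1 - x ^ 2 - y ^ 2) := Real.sqrt_pos.mpr ht
    have h1 : HasDerivAt (fun x : ℝ => 1 - x ^ 2 - y ^ 2) (-(2 * x)) x := by
      have h2 := ((hasDerivAt_pow 2 x).const_sub (1 : ℝ)).sub_const (y ^ 2)
      refine h2.congr_deriv (Eq.symm ?_)
      ring
    have h2 : HasDerivAt (fun x : ℝ => Real.sqrt (1 - x ^ 2 - y ^ 2))
        (-(2 * x) / (2 * Real.sqrt (1 - x ^ 2 - y ^ 2))) x := h1.sqrt ht.ne'
    have h3 := h2.const_mul b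
    have h4 := (hasDerivAt_id x).div h3 (by positivity)
    refine h4.congr_deriv (Eq.symm ?_)
    have hss : Real.sqrt (1 - x ^ 2 - y ^ 2) * Real.sqrt (1 - x ^ 2 - y ^ 2)
        = 1 - x ^ 2 - y ^ 2 := Real.mul_self_sqrt ht.le
    have hrw : (1 - x ^ 2 - y ^ 2) ^ (-(3:ℝ)/2)
        = ((1 - x ^ 2 - y ^ 2) * Real.sqrt (1 - x ^ 2 - y ^ 2))⁻¹ := by
      rw [show (-(3:ℝ)/2) = -((3:ℝ)/2) by ring, Real.rpow_neg ht.le]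
      congr 1
      rw [show ((3:ℝ)/2) = 1 + 1/2 by ring, Real.rpow_add ht, Real.rpow_one,
        ← Real.sqrt_eq_rpow]
    rw [hrw]
    set s := Real.sqrt (1 - x ^ 2 - y ^ 2) with hsdef
    simp only [id]
    field_simp
    linear_combination s^2*hb + x^2*hss
  have hcont : IntervalIntegrable (fun x => (1 - x ^ 2 - y ^ 2) ^ (-(3:ℝ)/2))
      MeasureTheory.volume (-a) a := by
    apply ContinuousOn.intervalIntegrable
    apply ContinuousOn.rpow_const
    · exact (by continuity : Continuous fun x : ℝ => 1 - x ^ 2 - y ^ 2).continuousOn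
    · intro x hx; exact Or.inl (key x hx).ne'
  rw [intervalIntegral.integral_eq_sub_of_hasDerivAt hderiv hcont]
  have hst : Real.sqrt (1 - a ^ 2 - y ^ 2) = Real.sqrt b * Real.sqrt (1 - C ^ 2) := by
    rw [← Real.sqrt_mul hbpos.le]
    congr 1
    rw [ha2]; ring
  have h1C : 0 < Real.sqrt (1 - C ^ 2) := Real.sqrt_pos.mpr (by nlinarith)
  have hsb : Real.sqrt b * Real.sqrt b = b := Real.mul_self_sqrt hbpos.le
  have hna : (1 : ℝ) - (-a) ^ 2 - y ^ 2 = 1 - a ^ 2 - y ^ 2 := by ring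
  rw [hna, hst, ha]
  have hsbp : 0 < Real.sqrt b := Real.sqrt_pos.mpr hbpos
  rw [show b = Real.sqrt b ^ 2 from (Real.sq_sqrt hbpos.le).symm]
  field_simp
  ring

theorem area_distance_band_segment (C η : ℝ) (hC0 : 0 < C) (hC1 : C < 1)
    (hη0 : 0 ≤ η) (hη1 : η < 1) :
    (∫ y in (0:ℝ)..η, ∫ x in (-(C * Real.sqrt (1 - y ^ 2)))..(C * Real.sqrt (1 - y ^ 2)),
        (1 - x ^ 2 - y ^ 2) ^ (-(3:ℝ)/2)) =
      2 * C / Real.sqrt (1 - C ^ 2) * artanh η := by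
  have h1C : 0 < Real.sqrt (1 - C ^ 2) := Real.sqrt_pos.mpr (by nlinarith)
  have hcongr : (∫ y in (0:ℝ)..η, ∫ x in (-(C * Real.sqrt (1 - y ^ 2)))..(C * Real.sqrt (1 - y ^ 2)),
        (1 - x ^ 2 - y ^ 2) ^ (-(3:ℝ)/2))
      = ∫ y in (0:ℝ)..η, 2 * C / (Real.sqrt (1 - C ^ 2) * (1 - y ^ 2)) := by
    apply intervalIntegral.integral_congr
    intro y hy
    rw [Set.uIcc_of_le hη0] at hy
    exact inner_int C hC0 hC1 y (by nlinarith [hy.1, hy.2])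
  rw [hcongr]
  have hderiv : ∀ y ∈ Set.uIcc (0:ℝ) η,
      HasDerivAt (fun y => 2 * C / Real.sqrt (1 - C ^ 2) * artanh y)
        (2 * C / (Real.sqrt (1 - C ^ 2) * (1 - y ^ 2))) y := by
    intro y hy
    rw [Set.uIcc_of_le hη0] at hy
    have hy1 : y < 1 := lt_of_le_of_lt hy.2 hη1
    have hy0 : 0 ≤ y := hy.1
    have hne1 : (1 : ℝ) - y ≠ 0 := by linarith
    have hne2 : (1 : ℝ) + y ≠ 0 := by positivity
    have hfne : (1 + y) / (1 - y) ≠ 0 := div_ne_zero hne2 hne1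
    have h1 : HasDerivAt (fun y : ℝ => (1 + y) / (1 - y))
        ((1 * (1 - y) - (1 + y) * (-1)) / (1 - y) ^ 2) y :=
      ((hasDerivAt_id y).const_add 1).div ((hasDerivAt_id y).const_sub 1) hne1
    have h2 := (h1.log hfne).div_const 2
    have h3 := h2.const_mul (2 * C / Real.sqrt (1 - C ^ 2))
    refine h3.congr_deriv (Eq.symm ?_)
    have hyy : (1:ℝ) - y ^ 2 ≠ 0 := by nlinarith
    field_simp
    ring
  have hcont : IntervalIntegrable (fun y => 2 * C / (Real.sqrt (1 - C ^ 2) * (1 - y ^ 2)))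
      MeasureTheory.volume 0 η := by
    apply ContinuousOn.intervalIntegrable
    apply ContinuousOn.div continuousOn_const
    · exact (continuous_const.mul (continuous_const.sub (continuous_pow 2))).continuousOn
    · intro y hy
      rw [Set.uIcc_of_le hη0] at hy
      have h2 : y ^ 2 < 1 := by nlinarith [hy.1, hy.2]
      exact (mul_pos h1C (by linarith)).ne'
  rw [intervalIntegral.integral_eq_sub_of_hasDerivAt hderiv hcont]
  simp [artanh]
end

section
/- Let 0 < C < 1 and 0 ≤ η < 1. Then ∫₀^η ∫_{−C√(2y(1−y))}^{C√(2y(1−y))} (1 − x² − y²)^{−3/2} dx dy = (2C/√(1−C²)) · artanh( √(2η)·√(1−C²) / √(1+η−2C²η) ) − 2·arctan( C√(2η) / √(1+η−2C²η) ). Equivalently, this is the hyperbolic area of the truncated h-elliptic parabolic disk E^C_η = {(x,y) : x²/C² + 2y² − 2y ≤ 0, y ≤ η}. -/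
open Real hiding artanh

lemma rpow_neg_three_half (u : ℝ) (hu : 0 < u) :
    u ^ (-(3:ℝ)/2) = 1 / (u * Real.sqrt u) := by
  rw [show -(3:ℝ)/2 = -(3/2) by norm_num, Real.rpow_neg hu.le, one_div]
  congr 1
  rw [show (3:ℝ)/2 = 1 + 1/2 by norm_num, Real.rpow_add hu, Real.rpow_one,
    Real.sqrt_eq_rpow]

lemma hasDerivAt_inner (y x : ℝ) (h : 0 < 1 - y ^ 2 - x ^ 2) :
    HasDerivAt (fun t => t / ((1 - y ^ 2) * Real.sqrt (1 - y ^ 2 - t ^ 2)))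
      ((1 - x ^ 2 - y ^ 2) ^ (-(3:ℝ)/2)) x := by
  have hy2 : 0 < 1 - y ^ 2 := by nlinarith [sq_nonneg x]
  have hsq : 0 < Real.sqrt (1 - y ^ 2 - x ^ 2) := Real.sqrt_pos.2 h
  have hu : HasDerivAt (fun t : ℝ => 1 - y ^ 2 - t ^ 2) (-(2 * x)) x := by
    simpa using ((hasDerivAt_pow 2 x).const_sub (1 - y ^ 2))
  have hs : HasDerivAt (fun t : ℝ => Real.sqrt (1 - y ^ 2 - t ^ 2))
      (-(2 * x) / (2 * Real.sqrt (1 - y ^ 2 - x ^ 2))) x := hu.sqrt h.ne'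
  have hd : HasDerivAt (fun t : ℝ => (1 - y ^ 2) * Real.sqrt (1 - y ^ 2 - t ^ 2))
      ((1 - y ^ 2) * (-(2 * x) / (2 * Real.sqrt (1 - y ^ 2 - x ^ 2)))) x := hs.const_mul _
  have hne : (1 - y ^ 2) * Real.sqrt (1 - y ^ 2 - x ^ 2) ≠ 0 := by positivity
  have := (hasDerivAt_id' x).div hd hne
  refine this.congr_deriv ?_
  symm
  rw [show (1 - x ^ 2 - y ^ 2) = 1 - y ^ 2 - x ^ 2 by ring, rpow_neg_three_half _ h]
  have h2 : Real.sqrt (1 - y ^ 2 - x ^ 2) ^ 2 = 1 - y ^ 2 - x ^ 2 := Real.sq_sqrt h.le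
  field_simp
  linear_combination x^2 * h2

lemma inner_eval (C y : ℝ) (hC0 : 0 ≤ C) (hC1 : C ^ 2 ≤ 1) (hy0 : 0 ≤ y) (hy1 : y < 1) :
    (∫ x in (-(C * Real.sqrt (2 * y * (1 - y))))..(C * Real.sqrt (2 * y * (1 - y))),
        (1 - x ^ 2 - y ^ 2) ^ (-(3:ℝ)/2))
      = 2 * C * Real.sqrt (2 * y) / ((1 - y ^ 2) * Real.sqrt (1 + y - 2 * C ^ 2 * y)) := by
  have h2y : (0:ℝ) ≤ 2 * y * (1 - y) := by nlinarith
  set a := C * Real.sqrt (2 * y * (1 - y)) with ha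
  have ha0 : 0 ≤ a := mul_nonneg hC0 (Real.sqrt_nonneg _)
  have ha2 : a ^ 2 = C ^ 2 * (2 * y * (1 - y)) := by
    rw [ha, mul_pow, Real.sq_sqrt h2y]
  have hP : 0 < 1 + y - 2 * C ^ 2 * y := by nlinarith
  have key : ∀ x ∈ Set.uIcc (-a) a, 0 < 1 - y ^ 2 - x ^ 2 := by
    intro x hx
    rw [Set.uIcc_of_le (by linarith)] at hx
    have hx2 : x ^ 2 ≤ a ^ 2 := sq_le_sq' hx.1 hx.2
    nlinarith
  have hint : IntervalIntegrable (fun x => (1 - x ^ 2 - y ^ 2) ^ (-(3:ℝ)/2))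
      MeasureTheory.volume (-a) a := by
    apply ContinuousOn.intervalIntegrable
    apply ContinuousOn.rpow_const
    · fun_prop
    · intro x hx
      exact Or.inl (by have := key x hx; intro hc; nlinarith)
  rw [intervalIntegral.integral_eq_sub_of_hasDerivAt
    (fun x hx => hasDerivAt_inner y x (key x hx)) hint]
  have hfac : 1 - y ^ 2 - a ^ 2 = (1 - y) * (1 + y - 2 * C ^ 2 * y) := by rw [ha2]; ring
  have hsa : Real.sqrt (2 * y * (1 - y)) = Real.sqrt (2 * y) * Real.sqrt (1 - y) := by
    rw [show 2 * y * (1 - y) = (2 * y) * (1 - y) by ring, Real.sqrt_mul (by positivity)]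
  have h1y : (0:ℝ) < Real.sqrt (1 - y) := Real.sqrt_pos.2 (by linarith)
  have hPs : (0:ℝ) < Real.sqrt (1 + y - 2 * C ^ 2 * y) := Real.sqrt_pos.2 hP
  have hy2 : (0:ℝ) < 1 - y ^ 2 := by nlinarith
  have hS : Real.sqrt (1 - y ^ 2 - a ^ 2)
      = Real.sqrt (1 - y) * Real.sqrt (1 + y - 2 * C ^ 2 * y) := by
    rw [hfac, Real.sqrt_mul (by linarith : (0:ℝ) ≤ 1 - y)]
  rw [hsa] at ha
  simp only [neg_sq, hS]
  rw [ha]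
  field_simp
  ring

lemma hasDerivAt_sqrt_two_mul (y : ℝ) (hy : 0 < y) :
    HasDerivAt (fun t : ℝ => Real.sqrt (2 * t)) (1 / Real.sqrt (2 * y)) y := by
  have h : HasDerivAt (fun t : ℝ => 2 * t) 2 y := by
    simpa using (hasDerivAt_id y).const_mul 2
  have := h.sqrt (by positivity)
  convert this using 1
  rw [eq_div_iff (by positivity)]
  field_simp

lemma hasDerivAt_sqrtP (C y : ℝ) (hP : 0 < 1 + y - 2 * C ^ 2 * y) :
    HasDerivAt (fun t : ℝ => Real.sqrt (1 + t - 2 * C ^ 2 * t))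
      ((1 - 2 * C ^ 2) / (2 * Real.sqrt (1 + y - 2 * C ^ 2 * y))) y := by
  have h : HasDerivAt (fun t : ℝ => 1 + t - 2 * C ^ 2 * t) (1 - 2 * C ^ 2) y := by
    exact (((hasDerivAt_id' y).const_add 1).sub ((hasDerivAt_id' y).const_mul (2 * C ^ 2))).congr_deriv (by ring)
  exact h.sqrt (by positivity)

lemma hasDerivAt_u (C y : ℝ) (hC1 : C ^ 2 < 1) (hy0 : 0 < y) (hy1 : y < 1) :
    HasDerivAt (fun t : ℝ =>
        Real.sqrt (2 * t) * Real.sqrt (1 - C ^ 2) / Real.sqrt (1 + t - 2 * C ^ 2 * t))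
      (Real.sqrt (1 - C ^ 2) /
        (Real.sqrt (2 * y) * (1 + y - 2 * C ^ 2 * y) * Real.sqrt (1 + y - 2 * C ^ 2 * y))) y := by
  have hP : 0 < 1 + y - 2 * C ^ 2 * y := by nlinarith
  have hp0 : 0 < Real.sqrt (1 + y - 2 * C ^ 2 * y) := Real.sqrt_pos.2 hP
  have hs0 : 0 < Real.sqrt (2 * y) := Real.sqrt_pos.2 (by linarith)
  have := ((hasDerivAt_sqrt_two_mul y hy0).mul_const (Real.sqrt (1 - C ^ 2))).div
    (hasDerivAt_sqrtP C y hP) hp0.ne'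
  refine this.congr_deriv ?_
  symm
  set s := Real.sqrt (2 * y) with hsdef
  set p := Real.sqrt (1 + y - 2 * C ^ 2 * y) with hpdef
  set k := Real.sqrt (1 - C ^ 2) with hkdef
  have hs : s ^ 2 = 2 * y := Real.sq_sqrt (by linarith)
  have hp : p ^ 2 = 1 + y - 2 * C ^ 2 * y := Real.sq_sqrt hP.le
  field_simp
  rw [div_eq_iff (by intro h; linarith)]
  linear_combination (2*k - 2*k*(1+y-2*C^2*y))*hp + k*(1+y-2*C^2*y)*(1-2*C^2)*hs


lemma algebra1 (Cv y s p k : ℝ) (hs : s^2 = 2*y) (hp : p^2 = 1+y-2*Cv^2*y) (hk : k^2 = 1-Cv^2)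
    (hs0 : 0 < s) (hp0 : 0 < p) (hk0 : 0 < k) (hy1 : y < 1) (hlt : s*k < p) :
    2*Cv/k * ((((k/(s*(1+y-2*Cv^2*y)*p)) * (1 - s*k/p) - (1 + s*k/p) * (-(k/(s*(1+y-2*Cv^2*y)*p)))) / (1 - s*k/p)^2 / ((1+s*k/p)/(1-s*k/p))) / 2)
      = 2*Cv/(s*p*(1-y)) := by
  have hku : 0 < s*k := mul_pos hs0 hk0
  have h1 : (1:ℝ) - s*k/p = (p - s*k)/p := by field_simp
  have h2 : (1:ℝ) + s*k/p = (p + s*k)/p := by field_simp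
  have hm : 0 < p - s*k := by linarith
  have hpl : 0 < p + s*k := by linarith
  have hP : 0 < 1+y-2*Cv^2*y := by rw [← hp]; positivity
  have hy : 0 < 1 - y := by linarith
  have hm' : p - s*k ≠ 0 := hm.ne'
  have hy' : 1 - y ≠ 0 := hy.ne'
  rw [h1, h2, ← hp]
  field_simp
  rw [div_eq_iff (by linarith : 0 < p - k*s).ne']
  linear_combination (-2*Cv*p)*hp + (2*Cv*p*s^2)*hk + (2*Cv*p*(1-Cv^2))*hs

set_option maxHeartbeats 1000000 in
lemma hasDerivAt_part1 (C y : ℝ) (hC0 : 0 < C) (hC1 : C ^ 2 < 1) (hy0 : 0 < y) (hy1 : y < 1) :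
    HasDerivAt (fun t : ℝ => 2 * C / Real.sqrt (1 - C ^ 2) *
        (Real.log ((1 + Real.sqrt (2 * t) * Real.sqrt (1 - C ^ 2) / Real.sqrt (1 + t - 2 * C ^ 2 * t)) /
          (1 - Real.sqrt (2 * t) * Real.sqrt (1 - C ^ 2) / Real.sqrt (1 + t - 2 * C ^ 2 * t))) / 2))
      (2 * C / (Real.sqrt (2 * y) * Real.sqrt (1 + y - 2 * C ^ 2 * y) * (1 - y))) y := by
  have hP : 0 < 1 + y - 2 * C ^ 2 * y := by nlinarith
  have hp0 : 0 < Real.sqrt (1 + y - 2 * C ^ 2 * y) := Real.sqrt_pos.2 hP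
  have hs0 : 0 < Real.sqrt (2 * y) := Real.sqrt_pos.2 (by linarith)
  have hk0 : 0 < Real.sqrt (1 - C ^ 2) := Real.sqrt_pos.2 (by linarith)
  set s := Real.sqrt (2 * y) with hsdef
  set p := Real.sqrt (1 + y - 2 * C ^ 2 * y) with hpdef
  set k := Real.sqrt (1 - C ^ 2) with hkdef
  have hs : s ^ 2 = 2 * y := Real.sq_sqrt (by linarith)
  have hp : p ^ 2 = 1 + y - 2 * C ^ 2 * y := Real.sq_sqrt hP.le
  have hk : k ^ 2 = 1 - C ^ 2 := Real.sq_sqrt (by linarith)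
  have hu := hasDerivAt_u C y hC1 hy0 hy1
  have hlt : s * k < p := by
    nlinarith [mul_pos hs0 hk0]
  have hune : (1 : ℝ) - s * k / p ≠ 0 := by
    have : s * k / p < 1 := (div_lt_one hp0).2 hlt
    linarith
  have hupos : (0:ℝ) < 1 + s * k / p := by positivity
  have huval : (fun t : ℝ => Real.sqrt (2 * t) * Real.sqrt (1 - C ^ 2) /
      Real.sqrt (1 + t - 2 * C ^ 2 * t)) y = s * k / p := rfl
  have h1 : HasDerivAt (fun t : ℝ => 1 + Real.sqrt (2 * t) * k / Real.sqrt (1 + t - 2 * C ^ 2 * t))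
      (k / (s * (1 + y - 2 * C ^ 2 * y) * p)) y := hu.const_add 1
  have h2 : HasDerivAt (fun t : ℝ => 1 - Real.sqrt (2 * t) * k / Real.sqrt (1 + t - 2 * C ^ 2 * t))
      (-(k / (s * (1 + y - 2 * C ^ 2 * y) * p))) y := hu.const_sub 1
  have hq := h1.div h2 (by exact hune)
  have hqpos : (0:ℝ) < (1 + s * k / p) / (1 - s * k / p) := by
    apply div_pos hupos
    have : s * k / p < 1 := (div_lt_one hp0).2 hlt
    linarith
  have hlog := hq.log (ne_of_gt (by exact hqpos))
  have := (hlog.div_const 2).const_mul (2 * C / k)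
  refine this.congr_deriv ?_
  symm
  simp only [← hsdef, ← hpdef, ← hkdef]
  exact (algebra1 C y s p k hs hp hk hs0 hp0 hk0 hy1 hlt).symm

lemma algebra2 (Cv y s p : ℝ) (hs : s^2 = 2*y) (hp : p^2 = 1+y-2*Cv^2*y)
    (hs0 : 0 < s) (hp0 : 0 < p) :
    1 / (1 + (Cv*s/p)^2) * ((Cv*(1/s)*p - Cv*s*((1-2*Cv^2)/(2*p)))/p^2)
      = Cv/(s*p*(1+y)) := by
  have hy : 0 < 1 + y := by nlinarith
  have hy' : 1 + y ≠ 0 := hy.ne'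
  field_simp
  linear_combination (2*Cv*y)*hp + Cv*(2*Cv^2*y-1-y)*hs

set_option maxHeartbeats 1000000 in
lemma hasDerivAt_part2 (C y : ℝ) (hC1 : C ^ 2 < 1) (hy0 : 0 < y) (hy1 : y < 1) :
    HasDerivAt (fun t : ℝ => Real.arctan (C * Real.sqrt (2 * t) / Real.sqrt (1 + t - 2 * C ^ 2 * t)))
      (C / (Real.sqrt (2 * y) * Real.sqrt (1 + y - 2 * C ^ 2 * y) * (1 + y))) y := by
  have hP : 0 < 1 + y - 2 * C ^ 2 * y := by nlinarith
  have hp0 : 0 < Real.sqrt (1 + y - 2 * C ^ 2 * y) := Real.sqrt_pos.2 hP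
  have hs0 : 0 < Real.sqrt (2 * y) := Real.sqrt_pos.2 (by linarith)
  have hv := (((hasDerivAt_sqrt_two_mul y hy0).const_mul C).div
    (hasDerivAt_sqrtP C y hP) hp0.ne').arctan
  refine hv.congr_deriv ?_
  symm
  set s := Real.sqrt (2 * y) with hsdef
  set p := Real.sqrt (1 + y - 2 * C ^ 2 * y) with hpdef
  have hs : s ^ 2 = 2 * y := Real.sq_sqrt (by linarith)
  have hp : p ^ 2 = 1 + y - 2 * C ^ 2 * y := Real.sq_sqrt hP.le
  exact (algebra2 C y s p hs hp hs0 hp0).symm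

lemma hasDerivAt_F (C y : ℝ) (hC0 : 0 < C) (hC1 : C ^ 2 < 1) (hy0 : 0 < y) (hy1 : y < 1) :
    HasDerivAt (fun t : ℝ => 2 * C / Real.sqrt (1 - C ^ 2) *
        artanh (Real.sqrt (2 * t) * Real.sqrt (1 - C ^ 2) / Real.sqrt (1 + t - 2 * C ^ 2 * t)) -
        2 * Real.arctan (C * Real.sqrt (2 * t) / Real.sqrt (1 + t - 2 * C ^ 2 * t)))
      (2 * C * Real.sqrt (2 * y) / ((1 - y ^ 2) * Real.sqrt (1 + y - 2 * C ^ 2 * y))) y := by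
  have hP : 0 < 1 + y - 2 * C ^ 2 * y := by nlinarith
  have hp0 : 0 < Real.sqrt (1 + y - 2 * C ^ 2 * y) := Real.sqrt_pos.2 hP
  have hs0 : 0 < Real.sqrt (2 * y) := Real.sqrt_pos.2 (by linarith)
  have h := (hasDerivAt_part1 C y hC0 hC1 hy0 hy1).sub
    ((hasDerivAt_part2 C y hC1 hy0 hy1).const_mul 2)
  refine h.congr_deriv ?_
  symm
  set s := Real.sqrt (2 * y) with hsdef
  set p := Real.sqrt (1 + y - 2 * C ^ 2 * y) with hpdef
  have hs : s ^ 2 = 2 * y := Real.sq_sqrt (by linarith)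
  have hy2 : (0:ℝ) < 1 - y ^ 2 := by nlinarith
  have h1y : (0:ℝ) < 1 - y := by linarith
  have h2y : (0:ℝ) < 1 + y := by linarith
  field_simp
  linear_combination (1-y^2)*hs

theorem area_truncated_h_elliptic_parabolic_disk (C η : ℝ) (hC0 : 0 < C) (hC1 : C < 1)
    (hη0 : 0 ≤ η) (hη1 : η < 1) :
    (∫ y in (0:ℝ)..η, ∫ x in (-(C * Real.sqrt (2 * y * (1 - y))))..(C * Real.sqrt (2 * y * (1 - y))),
        (1 - x ^ 2 - y ^ 2) ^ (-(3:ℝ)/2)) =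
      2 * C / Real.sqrt (1 - C ^ 2) *
        artanh (Real.sqrt (2 * η) * Real.sqrt (1 - C ^ 2) / Real.sqrt (1 + η - 2 * C ^ 2 * η)) -
      2 * Real.arctan (C * Real.sqrt (2 * η) / Real.sqrt (1 + η - 2 * C ^ 2 * η)) := by
  have hC2 : C ^ 2 < 1 := by nlinarith
  have hk2 : (0:ℝ) < 1 - C ^ 2 := by linarith
  have hk0 : 0 < Real.sqrt (1 - C ^ 2) := Real.sqrt_pos.2 hk2
  set g : ℝ → ℝ := fun y =>
    2 * C * Real.sqrt (2 * y) / ((1 - y ^ 2) * Real.sqrt (1 + y - 2 * C ^ 2 * y)) with hg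
  set F : ℝ → ℝ := fun t => 2 * C / Real.sqrt (1 - C ^ 2) *
      artanh (Real.sqrt (2 * t) * Real.sqrt (1 - C ^ 2) / Real.sqrt (1 + t - 2 * C ^ 2 * t)) -
      2 * Real.arctan (C * Real.sqrt (2 * t) / Real.sqrt (1 + t - 2 * C ^ 2 * t)) with hF
  have hcong : Set.EqOn (fun y : ℝ =>
      ∫ x in (-(C * Real.sqrt (2 * y * (1 - y))))..(C * Real.sqrt (2 * y * (1 - y))),
        (1 - x ^ 2 - y ^ 2) ^ (-(3:ℝ)/2)) g (Set.uIcc 0 η) := by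
    intro y hy
    rw [Set.uIcc_of_le hη0] at hy
    exact inner_eval C y hC0.le hC2.le hy.1 (lt_of_le_of_lt hy.2 hη1)
  rw [intervalIntegral.integral_congr hcong]
  have hPpos : ∀ y : ℝ, 0 ≤ y → y < 1 → 0 < 1 + y - 2 * C ^ 2 * y := by
    intro y h0 h1; nlinarith
  have hint : IntervalIntegrable g MeasureTheory.volume 0 η := by
    apply ContinuousOn.intervalIntegrable
    apply ContinuousOn.div
    · fun_prop
    · fun_prop
    · intro y hy
      rw [Set.uIcc_of_le hη0] at hy
      have hP := hPpos y hy.1 (lt_of_le_of_lt hy.2 hη1)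
      have h1 : (0:ℝ) < 1 - y ^ 2 := by nlinarith [hy.1, lt_of_le_of_lt hy.2 hη1]
      positivity
  have hderiv : ∀ y ∈ Set.Ioo (0:ℝ) η, HasDerivWithinAt F (g y) (Set.Ioi y) y := by
    intro y hy
    exact (hasDerivAt_F C y hC0 hC2 hy.1 (hy.2.trans hη1)).hasDerivWithinAt
  have hcont : ContinuousOn F (Set.Icc 0 η) := by
    have hlt : ∀ y ∈ Set.Icc (0:ℝ) η,
        Real.sqrt (2 * y) * Real.sqrt (1 - C ^ 2) < Real.sqrt (1 + y - 2 * C ^ 2 * y) := by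
      intro y hy
      obtain ⟨hy0', hy2'⟩ := hy
      have hy1 : y < 1 := lt_of_le_of_lt hy2' hη1
      rw [← Real.sqrt_mul (by linarith : (0:ℝ) ≤ 2 * y)]
      apply Real.sqrt_lt_sqrt (by nlinarith)
      nlinarith
    have hPne : ∀ y ∈ Set.Icc (0:ℝ) η, Real.sqrt (1 + y - 2 * C ^ 2 * y) ≠ 0 := by
      intro y hy
      exact (Real.sqrt_pos.2 (hPpos y hy.1 (lt_of_le_of_lt hy.2 hη1))).ne'
    have hu : ContinuousOn (fun t : ℝ =>
        Real.sqrt (2 * t) * Real.sqrt (1 - C ^ 2) / Real.sqrt (1 + t - 2 * C ^ 2 * t))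
        (Set.Icc 0 η) := by
      apply ContinuousOn.div
      · fun_prop
      · fun_prop
      · exact hPne
    have hune : ∀ y ∈ Set.Icc (0:ℝ) η,
        (0:ℝ) < 1 - Real.sqrt (2 * y) * Real.sqrt (1 - C ^ 2) / Real.sqrt (1 + y - 2 * C ^ 2 * y) := by
      intro y hy
      have := hlt y hy
      have hp0 := (hPne y hy)
      have hp0' : 0 < Real.sqrt (1 + y - 2 * C ^ 2 * y) :=
        lt_of_le_of_ne (Real.sqrt_nonneg _) (Ne.symm hp0)
      have : Real.sqrt (2 * y) * Real.sqrt (1 - C ^ 2) / Real.sqrt (1 + y - 2 * C ^ 2 * y) < 1 :=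
        (div_lt_one hp0').2 this
      linarith
    have hupos : ∀ y ∈ Set.Icc (0:ℝ) η,
        (0:ℝ) < 1 + Real.sqrt (2 * y) * Real.sqrt (1 - C ^ 2) / Real.sqrt (1 + y - 2 * C ^ 2 * y) := by
      intro y hy
      have hp0' : 0 < Real.sqrt (1 + y - 2 * C ^ 2 * y) :=
        lt_of_le_of_ne (Real.sqrt_nonneg _) (Ne.symm (hPne y hy))
      positivity
    show ContinuousOn (fun t : ℝ => 2 * C / Real.sqrt (1 - C ^ 2) *
      (Real.log ((1 + Real.sqrt (2 * t) * Real.sqrt (1 - C ^ 2) / Real.sqrt (1 + t - 2 * C ^ 2 * t)) /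
        (1 - Real.sqrt (2 * t) * Real.sqrt (1 - C ^ 2) / Real.sqrt (1 + t - 2 * C ^ 2 * t))) / 2) -
      2 * Real.arctan (C * Real.sqrt (2 * t) / Real.sqrt (1 + t - 2 * C ^ 2 * t))) (Set.Icc 0 η)
    apply ContinuousOn.sub
    · apply ContinuousOn.mul continuousOn_const
      apply ContinuousOn.div_const
      apply ContinuousOn.log
      · exact (continuousOn_const.add hu).div (continuousOn_const.sub hu)
          (fun y hy => (hune y hy).ne')
      · intro y hy
        exact (div_pos (hupos y hy) (hune y hy)).ne'
    · apply ContinuousOn.mul continuousOn_const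
      exact Real.continuous_arctan.comp_continuousOn
        ((continuousOn_const.mul (by fun_prop)).div (by fun_prop) hPne)
  rw [intervalIntegral.integral_eq_sub_of_hasDeriv_right_of_le hη0 hcont hderiv hint]
  have hF0 : F 0 = 0 := by
    simp [hF, artanh]
  rw [hF0, sub_zero]
end

section
/- Let 0 < C < 1 and let A^C = {(x,y) : |x| ≤ C(1−y), 0 ≤ y < 1} be the partly asymptotic triangle with vertices (±C, 0) and asymptotic vertex (0,1). Then ∫∫_{A^C} (1 − x² − y²)^{−3/2} dx dy = 2 arcsin C. -/
open MeasureTheory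
open Set

lemma inner_deriv (y x : ℝ) (hb : 0 < 1 - y^2) (hx : x^2 < 1 - y^2) :
    HasDerivAt (fun t => t / ((1 - y^2) * Real.sqrt (1 - y^2 - t^2)))
      ((1 - x^2 - y^2) ^ (-(3:ℝ)/2)) x := by
  have hs : 0 < 1 - y^2 - x^2 := by linarith
  have hsq : 0 < Real.sqrt (1 - y^2 - x^2) := Real.sqrt_pos.2 hs
  have h1 : HasDerivAt (fun t : ℝ => 1 - y^2 - t^2) (-(2*x)) x := by
    simpa using ((hasDerivAt_pow 2 x).const_sub (1 - y^2))
  have h2 : HasDerivAt (fun t : ℝ => Real.sqrt (1 - y^2 - t^2))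
      (1 / (2 * Real.sqrt (1 - y^2 - x^2)) * (-(2*x))) x :=
    (Real.hasDerivAt_sqrt hs.ne').comp x h1
  have h3 : HasDerivAt (fun t : ℝ => (1 - y^2) * Real.sqrt (1 - y^2 - t^2))
      ((1 - y^2) * (1 / (2 * Real.sqrt (1 - y^2 - x^2)) * (-(2*x)))) x := h2.const_mul _
  have hden : (1 - y^2) * Real.sqrt (1 - y^2 - x^2) ≠ 0 := by positivity
  have h4 := (hasDerivAt_id x).div h3 hden
  convert h4 using 1
  · rfl
  · rfl
  · rfl
  have hrw : (1 - x^2 - y^2) = 1 - y^2 - x^2 := by ring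
  rw [hrw]
  rw [show (-(3:ℝ)/2) = -(3/2) by norm_num, Real.rpow_neg hs.le]
  have h32 : (1 - y^2 - x^2) ^ ((3:ℝ)/2) = (1 - y^2 - x^2) * Real.sqrt (1 - y^2 - x^2) := by
    rw [Real.sqrt_eq_rpow, ← Real.rpow_one_add' hs.le (by norm_num : (1:ℝ) + 1/2 ≠ 0)]
    norm_num
  rw [h32]
  set r := Real.sqrt (1 - y^2 - x^2) with hrdef
  have hr2 : r^2 = 1 - y^2 - x^2 := Real.sq_sqrt hs.le
  have hx2 : x^2 = (1 - y^2) - r^2 := by linarith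
  rw [← hr2]
  have hne : (1 : ℝ) - y^2 ≠ 0 := hb.ne'
  simp only [id_eq, one_mul]
  field_simp
  linear_combination (-1) * hr2

lemma inner_integral (C y : ℝ) (hC0 : 0 < C) (hC1 : C < 1) (hy0 : 0 ≤ y) (hy1 : y < 1) :
    ∫ x in (-(C*(1-y)))..(C*(1-y)), (1 - x^2 - y^2) ^ (-(3:ℝ)/2)
      = 2*C / ((1+y) * Real.sqrt ((1-y)*(1+y-C^2*(1-y)))) := by
  set a := C * (1 - y) with ha
  have hy1' : 0 < 1 - y := by linarith
  have hy2 : 0 < 1 + y := by linarith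
  have hb : 0 < 1 - y^2 := by nlinarith
  have ha0 : 0 < a := by positivity
  have hD : 0 < 1 + y - C^2*(1-y) := by nlinarith
  have haa : a^2 < 1 - y^2 := by
    have h2 : a^2 = C^2 * (1-y)^2 := by rw [ha]; ring
    nlinarith [mul_pos hy1' hD]
  have hsub : ∀ t ∈ Set.uIcc (-a) a, t^2 < 1 - y^2 := by
    intro t ht
    rw [Set.uIcc_of_le (by linarith : -a ≤ a)] at ht
    have h1 : -a ≤ t := ht.1
    have h2 : t ≤ a := ht.2
    nlinarith
  have hderiv : ∀ t ∈ Set.uIcc (-a) a,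
      HasDerivAt (fun t => t / ((1 - y^2) * Real.sqrt (1 - y^2 - t^2)))
        ((1 - t^2 - y^2) ^ (-(3:ℝ)/2)) t := fun t ht => inner_deriv y t hb (hsub t ht)
  have hcont : ContinuousOn (fun t : ℝ => (1 - t^2 - y^2) ^ (-(3:ℝ)/2)) (Set.uIcc (-a) a) := by
    intro t ht
    have hpos : 0 < 1 - t^2 - y^2 := by have := hsub t ht; linarith
    exact (((by continuity : Continuous fun t : ℝ => 1 - t^2 - y^2).continuousAt.rpow_const
      (Or.inl hpos.ne')).continuousWithinAt)
  have hint : IntervalIntegrable (fun t : ℝ => (1 - t^2 - y^2) ^ (-(3:ℝ)/2)) volume (-a) a :=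
    hcont.intervalIntegrable
  rw [intervalIntegral.integral_eq_sub_of_hasDerivAt hderiv hint]
  have hnegsq : (-a)^2 = a^2 := by ring
  rw [hnegsq]
  have hrw : 1 - y^2 - a^2 = (1-y) * (1 + y - C^2*(1-y)) := by rw [ha]; ring
  rw [hrw]
  have hsqrt : 0 < Real.sqrt ((1-y) * (1 + y - C^2*(1-y))) := Real.sqrt_pos.2 (by positivity)
  rw [ha]
  have hb' : (1 : ℝ) - y^2 = (1-y)*(1+y) := by ring
  rw [hb']
  field_simp
  ring

lemma outer_deriv (C y : ℝ) (hC0 : 0 < C) (hC1 : C < 1) (hy0 : 0 < y) (hy1 : y < 1) :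
    HasDerivAt (fun t => -2 * Real.arcsin (C * Real.sqrt ((1-t)/(1+t))))
      (2*C / ((1+y) * Real.sqrt ((1-y)*(1+y-C^2*(1-y))))) y := by
  have hy1' : 0 < 1 - y := by linarith
  have hy2 : 0 < 1 + y := by linarith
  set u := (1-y)/(1+y) with hu
  have hu_pos : 0 < u := by positivity
  have hu_lt1 : u < 1 := by rw [hu, div_lt_one hy2]; linarith
  have hsu : 0 < Real.sqrt u := Real.sqrt_pos.2 hu_pos
  have husq : Real.sqrt u ^ 2 = u := Real.sq_sqrt hu_pos.le
  have hsu_lt1 : Real.sqrt u < 1 := by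
    nlinarith [husq, hsu]
  have hz0 : 0 < C * Real.sqrt u := by positivity
  have hz1 : C * Real.sqrt u < 1 := by nlinarith
  -- derivative of u
  have hnum : HasDerivAt (fun t : ℝ => 1 - t) (-1) y := by
    simpa using (hasDerivAt_id y).const_sub 1
  have hden : HasDerivAt (fun t : ℝ => 1 + t) 1 y := by
    simpa using (hasDerivAt_id y).const_add 1
  have hu' : HasDerivAt (fun t : ℝ => (1-t)/(1+t))
      ((-1 * (1+y) - (1-y) * 1)/(1+y)^2) y := hnum.div hden hy2.ne'
  have hv : HasDerivAt (fun t : ℝ => Real.sqrt ((1-t)/(1+t)))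
      (1/(2*Real.sqrt u) * ((-1 * (1+y) - (1-y) * 1)/(1+y)^2)) y :=
    (Real.hasDerivAt_sqrt hu_pos.ne').comp y hu'
  have hw : HasDerivAt (fun t : ℝ => Real.arcsin (C * Real.sqrt ((1-t)/(1+t))))
      (1/Real.sqrt (1 - (C*Real.sqrt u)^2) *
        (C * (1/(2*Real.sqrt u) * ((-1 * (1+y) - (1-y) * 1)/(1+y)^2)))) y :=
    by have := (Real.hasDerivAt_arcsin (by linarith : C * Real.sqrt u ≠ -1)
      hz1.ne).comp y (hv.const_mul C); exact this
  have h := hw.const_mul (-2 : ℝ)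
  convert h using 1
  · rfl
  · rfl
  -- algebra
  have hD : 0 < 1 + y - C^2*(1-y) := by nlinarith
  have h1mz : 1 - (C*Real.sqrt u)^2 = 1 - C^2 * u := by rw [mul_pow, husq]
  rw [h1mz]
  have hCu : 0 < 1 - C^2 * u := by nlinarith [husq]
  have hkey : Real.sqrt (1 - C^2*u) * Real.sqrt u = Real.sqrt ((1-y)*(1+y-C^2*(1-y)))/(1+y) := by
    rw [← Real.sqrt_mul hCu.le]
    have : (1 - C^2*u) * u = ((1-y)*(1+y-C^2*(1-y)))/(1+y)^2 := by
      rw [hu]; field_simp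
    rw [this, Real.sqrt_div (by positivity), Real.sqrt_sq hy2.le]
  have hW : 0 < Real.sqrt ((1-y)*(1+y-C^2*(1-y))) := Real.sqrt_pos.2 (by positivity)
  have hS1 : 0 < Real.sqrt (1 - C^2*u) := Real.sqrt_pos.2 hCu
  set W := Real.sqrt ((1-y)*(1+y-C^2*(1-y))) with hWdef
  set S1 := Real.sqrt (1 - C^2*u) with hS1def
  set S2 := Real.sqrt u with hS2def
  clear_value W S1 S2
  have hkey' : S1 * S2 * (1+y) = W := by
    rw [hkey]; field_simp
  field_simp
  linear_combination 2 * hkey'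

lemma g_integrable (C : ℝ) (hC0 : 0 < C) (hC1 : C < 1) :
    IntervalIntegrable (fun y : ℝ => 2*C / ((1+y) * Real.sqrt ((1-y)*(1+y-C^2*(1-y)))))
      volume 0 1 := by
  have hCC : 0 < 1 - C^2 := by nlinarith
  set K := 2*C / Real.sqrt (1 - C^2) with hK
  have hbase : IntervalIntegrable (fun x : ℝ => x ^ (-(1/2) : ℝ)) volume 0 1 :=
    intervalIntegral.intervalIntegrable_rpow' (by norm_num)
  have hcomp : IntervalIntegrable (fun x : ℝ => (1 - x) ^ (-(1/2) : ℝ)) volume 0 1 := by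
    have := hbase.comp_sub_left 1
    simpa using this.symm
  have hmaj : IntervalIntegrable (fun x : ℝ => K * (1 - x) ^ (-(1/2) : ℝ)) volume 0 1 :=
    hcomp.const_mul K
  apply hmaj.mono_fun
  · apply Measurable.aestronglyMeasurable
    apply Measurable.div measurable_const
    exact (measurable_const.add measurable_id).mul
      (Real.continuous_sqrt.measurable.comp
        (by fun_prop : Measurable fun y : ℝ => (1-y)*(1+y-C^2*(1-y))))
  · rw [Set.uIoc_of_le (by norm_num : (0:ℝ) ≤ 1)]
    filter_upwards [ae_restrict_mem measurableSet_Ioc] with y hy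
    obtain ⟨hy0, hy1⟩ := hy
    have hy2 : 0 < 1 + y := by linarith
    simp only [Real.norm_eq_abs]
    rcases eq_or_lt_of_le hy1 with h1 | h1
    · subst h1
      have : Real.sqrt ((1-(1:ℝ))*(1+1-C^2*(1-1))) = 0 := by norm_num
      rw [this]
      simp [hK]
    · have hy1' : 0 < 1 - y := by linarith
      have hD : 0 < 1 + y - C^2*(1-y) := by nlinarith
      have hDD : 1 - C^2 ≤ 1 + y - C^2*(1-y) := by nlinarith
      have hsq : Real.sqrt (1-y) * Real.sqrt (1 - C^2) ≤
          Real.sqrt ((1-y)*(1+y-C^2*(1-y))) := by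
        rw [← Real.sqrt_mul hy1'.le]
        exact Real.sqrt_le_sqrt (by nlinarith)
      have hWpos : 0 < Real.sqrt ((1-y)*(1+y-C^2*(1-y))) := Real.sqrt_pos.2 (by positivity)
      have hrpow : (1 - y) ^ (-(1/2) : ℝ) = 1 / Real.sqrt (1-y) := by
        rw [Real.rpow_neg hy1'.le, Real.sqrt_eq_rpow]
        norm_num
      have hg_pos : 0 ≤ 2*C / ((1+y) * Real.sqrt ((1-y)*(1+y-C^2*(1-y)))) := by positivity
      have hh_pos : 0 ≤ K * (1 - y) ^ (-(1/2) : ℝ) := by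
        rw [hrpow]; positivity
      rw [abs_of_nonneg hg_pos, abs_of_nonneg hh_pos, hrpow, hK]
      rw [div_mul_div_comm, mul_one]
      have hle : Real.sqrt (1 - C^2) * Real.sqrt (1-y) ≤
          (1+y) * Real.sqrt ((1-y)*(1+y-C^2*(1-y))) := by
        calc Real.sqrt (1 - C^2) * Real.sqrt (1-y)
            ≤ Real.sqrt ((1-y)*(1+y-C^2*(1-y))) := by rw [mul_comm]; exact hsq
          _ ≤ (1+y) * Real.sqrt ((1-y)*(1+y-C^2*(1-y))) := by nlinarith
      gcongr

lemma outer_integral (C : ℝ) (hC0 : 0 < C) (hC1 : C < 1) :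
    ∫ y in (0:ℝ)..1, 2*C / ((1+y) * Real.sqrt ((1-y)*(1+y-C^2*(1-y))))
      = 2 * Real.arcsin C := by
  have hcont : ContinuousOn (fun t : ℝ => -2 * Real.arcsin (C * Real.sqrt ((1-t)/(1+t))))
      (Set.Icc 0 1) := by
    apply ContinuousOn.mul continuousOn_const
    apply Real.continuous_arcsin.comp_continuousOn
    apply ContinuousOn.mul continuousOn_const
    apply ContinuousOn.sqrt
    exact (continuousOn_const.sub continuousOn_id).div
      (continuousOn_const.add continuousOn_id)
      (fun t ht => by have := ht.1; positivity)
  have hderiv : ∀ y ∈ Set.Ioo (0:ℝ) 1,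
      HasDerivWithinAt (fun t : ℝ => -2 * Real.arcsin (C * Real.sqrt ((1-t)/(1+t))))
        (2*C / ((1+y) * Real.sqrt ((1-y)*(1+y-C^2*(1-y))))) (Set.Ioi y) y :=
    fun y hy => (outer_deriv C y hC0 hC1 hy.1 hy.2).hasDerivWithinAt
  rw [intervalIntegral.integral_eq_sub_of_hasDeriv_right_of_le (by norm_num) hcont hderiv
    (g_integrable C hC0 hC1)]
  norm_num

theorem area_asymptotic_triangle (C : ℝ) (hC0 : 0 < C) (hC1 : C < 1)
    (A : Set (ℝ × ℝ))
    (hA : A = {p : ℝ × ℝ | |p.1| ≤ C * (1 - p.2) ∧ 0 ≤ p.2 ∧ p.2 < 1}) :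
    (∫ p in A, (1 - p.1 ^ 2 - p.2 ^ 2) ^ (-(3:ℝ)/2)) = 2 * Real.arcsin C := by
  subst hA
  set A := {p : ℝ × ℝ | |p.1| ≤ C * (1 - p.2) ∧ 0 ≤ p.2 ∧ p.2 < 1} with hA
  set f : ℝ × ℝ → ℝ := fun p => (1 - p.1 ^ 2 - p.2 ^ 2) ^ (-(3:ℝ)/2) with hf
  set g : ℝ → ℝ := fun y => 2*C / ((1+y) * Real.sqrt ((1-y)*(1+y-C^2*(1-y)))) with hg
  have hAmeas : MeasurableSet A := by
    have h1 : MeasurableSet {p : ℝ × ℝ | |p.1| ≤ C * (1 - p.2)} :=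
      measurableSet_le (by fun_prop) (by fun_prop)
    have h2 : MeasurableSet {p : ℝ × ℝ | 0 ≤ p.2} := measurableSet_le (by fun_prop) (by fun_prop)
    have h3 : MeasurableSet {p : ℝ × ℝ | p.2 < 1} := measurableSet_lt (by fun_prop) (by fun_prop)
    exact h1.inter (h2.inter h3)
  have hfmeas : Measurable f := by
    rw [hf]; fun_prop
  set F : ℝ × ℝ → ℝ := A.indicator f with hF
  -- positivity of base on A
  have hbase : ∀ p ∈ A, 0 < 1 - p.1^2 - p.2^2 := by
    rintro ⟨x, y⟩ ⟨h1, h2, h3⟩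
    simp only at h1 h2 h3 ⊢
    have hy1' : 0 < 1 - y := by linarith
    have hD : 0 < 1 + y - C^2*(1-y) := by nlinarith
    have hx2 : x^2 ≤ C^2 * (1-y)^2 := by
      have := abs_le.1 h1
      nlinarith [abs_nonneg x, sq_abs x]
    nlinarith [mul_pos hy1' hD]
  have hFnonneg : ∀ p, 0 ≤ F p := by
    intro p
    apply Set.indicator_nonneg
    intro p hp
    exact Real.rpow_nonneg (hbase p hp).le _
  -- section description
  have hsec_eq : ∀ y ∈ Set.Ico (0:ℝ) 1, (fun x => F (x, y)) =
      (Set.Icc (-(C*(1-y))) (C*(1-y))).indicator (fun x => (1 - x^2 - y^2) ^ (-(3:ℝ)/2)) := by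
    intro y hy
    funext x
    have : (x, y) ∈ A ↔ x ∈ Set.Icc (-(C*(1-y))) (C*(1-y))  := by
      simp only [hA, Set.mem_setOf_eq, Set.mem_Icc, ← abs_le]
      exact ⟨fun h => h.1, fun h => ⟨h, hy.1, hy.2⟩⟩
    by_cases hx : x ∈ Set.Icc (-(C*(1-y))) (C*(1-y))
    · rw [Set.indicator_of_mem hx, hF, Set.indicator_of_mem (this.2 hx)]
    · rw [Set.indicator_of_notMem hx, hF, Set.indicator_of_notMem (fun h => hx (this.1 h))]
  have hsec_zero : ∀ y, y ∉ Set.Ico (0:ℝ) 1 → (fun x => F (x, y)) = 0 := by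
    intro y hy
    funext x
    rw [Set.mem_Ico, not_and_or, not_le, not_lt] at hy
    apply Set.indicator_of_notMem
    rintro ⟨h1, h2, h3⟩
    rcases hy with h | h
    · exact absurd h2 (not_le.2 h)
    · exact absurd h3 (not_lt.2 h)
  -- continuity of sections
  have hcontf : ∀ y ∈ Set.Ico (0:ℝ) 1, ContinuousOn
      (fun x : ℝ => (1 - x^2 - y^2) ^ (-(3:ℝ)/2)) (Set.Icc (-(C*(1-y))) (C*(1-y))) := by
    intro y hy x hx
    have hxA : (x, y) ∈ A := by
      rw [hA]; refine ⟨?_, hy.1, hy.2⟩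
      simp only [Set.mem_Icc] at hx
      exact abs_le.2 ⟨hx.1, hx.2⟩
    have hpos := hbase _ hxA
    simp only at hpos
    have hc : Continuous fun x : ℝ => 1 - x^2 - y^2 :=
      (continuous_const.sub (continuous_pow 2)).sub continuous_const
    exact ((hc.continuousAt.rpow_const (Or.inl hpos.ne')).continuousWithinAt)
  -- integrability of sections
  have hsec_int : ∀ y : ℝ, Integrable (fun x => F (x, y)) volume := by
    intro y
    by_cases hy : y ∈ Set.Ico (0:ℝ) 1
    · rw [hsec_eq y hy]
      exact ((hcontf y hy).integrableOn_Icc).integrable_indicator measurableSet_Icc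
    · rw [hsec_zero y hy]
      exact integrable_zero _ _ _
  -- value of section integrals
  have hsec_val : ∀ y : ℝ, (∫ x, F (x, y)) = (Set.Ico (0:ℝ) 1).indicator g y := by
    intro y
    by_cases hy : y ∈ Set.Ico (0:ℝ) 1
    · rw [hsec_eq y hy, Set.indicator_of_mem hy, integral_indicator measurableSet_Icc]
      have hle : -(C*(1-y)) ≤ C*(1-y) := by nlinarith [hy.1, hy.2]
      rw [integral_Icc_eq_integral_Ioc, ← intervalIntegral.integral_of_le hle]
      exact inner_integral C y hC0 hC1 hy.1 hy.2
    · rw [hsec_zero y hy, Set.indicator_of_notMem hy]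
      exact integral_zero _ _
  -- g integrable as indicator
  have hg_ind_int : Integrable ((Set.Ico (0:ℝ) 1).indicator g) volume := by
    have h := g_integrable C hC0 hC1
    rw [intervalIntegrable_iff_integrableOn_Ioc_of_le (by norm_num)] at h
    have h2 : IntegrableOn g (Set.Ico 0 1) volume := by
      rw [integrableOn_Ico_iff_integrableOn_Ioo]
      exact h.mono_set Set.Ioo_subset_Ioc_self
    exact h2.integrable_indicator measurableSet_Ico
  -- F a.e. strongly measurable on product
  have hFmeas : AEStronglyMeasurable F (volume.prod volume) := by
    rw [← Measure.volume_eq_prod]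
    exact (hfmeas.indicator hAmeas).aestronglyMeasurable
  -- Integrability of F on the product
  have hFint : Integrable F (volume.prod volume) := by
    rw [integrable_prod_iff' hFmeas]
    constructor
    · exact ae_of_all _ hsec_int
    · have : (fun y => ∫ x, ‖F (x, y)‖) = (Set.Ico (0:ℝ) 1).indicator g := by
        funext y
        have : (fun x => ‖F (x, y)‖) = fun x => F (x, y) := by
          funext x; rw [Real.norm_eq_abs, abs_of_nonneg (hFnonneg _)]
        rw [this, hsec_val]
      rw [this]
      exact hg_ind_int
  -- main computation
  calc (∫ p in A, f p) = ∫ p, F p := (integral_indicator hAmeas).symm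
    _ = ∫ p, F p ∂(volume.prod volume) := by rw [← Measure.volume_eq_prod]
    _ = ∫ y, ∫ x, F (x, y) := integral_prod_symm F hFint
    _ = ∫ y, (Set.Ico (0:ℝ) 1).indicator g y := by
        congr 1; funext y; exact hsec_val y
    _ = ∫ y in Set.Ico (0:ℝ) 1, g y := integral_indicator measurableSet_Ico
    _ = ∫ y in (0:ℝ)..1, g y := by
        rw [integral_Ico_eq_integral_Ioo, ← integral_Ioc_eq_integral_Ioo,
          ← intervalIntegral.integral_of_le (by norm_num)]
    _ = 2 * Real.arcsin C := outer_integral C hC0 hC1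
end

section
/- Let 0 < C < 1 and 0 < η < 1. The BCK distance between the points (C√(1−η²), η) and (C√(2η(1−η)), η) equals arcosh( (√(1+η) − C²√(2η)) / (√(1−C²)·√(1+η−2C²η)) ), and this quantity tends to 0 as η → 1⁻. (Hence the horizontal gap segments M^C_η between the cut-off h-elliptic parabola and the cut-off half distance band have hyperbolic length tending to 0.) -/
open Filter

theorem gap_segment_length_tendsto_zero (C : ℝ) (hC0 : 0 < C) (hC1 : C < 1) :
    (∀ η : ℝ, 0 < η → η < 1 →
      distBCK (C * Real.sqrt (1 - η ^ 2), η) (C * Real.sqrt (2 * η * (1 - η)), η) =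
        arcosh ((Real.sqrt (1 + η) - C ^ 2 * Real.sqrt (2 * η)) /
          (Real.sqrt (1 - C ^ 2) * Real.sqrt (1 + η - 2 * C ^ 2 * η)))) ∧
    Tendsto (fun η : ℝ =>
        arcosh ((Real.sqrt (1 + η) - C ^ 2 * Real.sqrt (2 * η)) /
          (Real.sqrt (1 - C ^ 2) * Real.sqrt (1 + η - 2 * C ^ 2 * η))))
      (nhdsWithin 1 (Set.Iio 1)) (nhds 0) := by
  have hC2 : (0:ℝ) < 1 - C ^ 2 := by nlinarith
  constructor
  · intro η hη0 hη1
    have h1η : (0:ℝ) < 1 - η := by linarith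
    have h1η' : (0:ℝ) < 1 + η := by linarith
    have hb : (0:ℝ) < 1 + η - 2 * C ^ 2 * η := by nlinarith
    unfold distBCK
    congr 1
    have e1 : 1 - η ^ 2 = (1 - η) * (1 + η) := by ring
    have e2 : 2 * η * (1 - η) = (1 - η) * (2 * η) := by ring
    rw [e1, e2, Real.sqrt_mul h1η.le, Real.sqrt_mul h1η.le]
    set s := Real.sqrt (1 - η) with hs_def
    set t := Real.sqrt (1 + η) with ht_def
    set u := Real.sqrt (2 * η) with hu_def
    have hs : s ^ 2 = 1 - η := Real.sq_sqrt h1η.le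
    have ht : t ^ 2 = 1 + η := Real.sq_sqrt h1η'.le
    have hu : u ^ 2 = 2 * η := Real.sq_sqrt (by linarith)
    have hspos : 0 < s := Real.sqrt_pos.mpr h1η
    have htpos : 0 < t := Real.sqrt_pos.mpr h1η'
    have hapos : 0 < Real.sqrt (1 - C ^ 2) := Real.sqrt_pos.mpr hC2
    have hbpos : 0 < Real.sqrt (1 + η - 2 * C ^ 2 * η) := Real.sqrt_pos.mpr hb
    have d1 : 1 - (C * (s * t)) ^ 2 - η ^ 2 = s ^ 2 * t ^ 2 * (1 - C ^ 2) := by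
      rw [show 1 - (C * (s * t)) ^ 2 - η ^ 2 = 1 - η ^ 2 - C ^ 2 * (s ^ 2 * t ^ 2) by ring,
        hs, ht]; ring
    have d2 : 1 - (C * (s * u)) ^ 2 - η ^ 2 = s ^ 2 * (1 + η - 2 * C ^ 2 * η) := by
      rw [show 1 - (C * (s * u)) ^ 2 - η ^ 2 = 1 - η ^ 2 - C ^ 2 * (s ^ 2 * u ^ 2) by ring,
        hs, hu]; ring
    have n1 : 1 - C * (s * t) * (C * (s * u)) - η * η = s ^ 2 * t * (t - C ^ 2 * u) := by
      rw [show 1 - C * (s * t) * (C * (s * u)) - η * η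
          = 1 - η ^ 2 - C ^ 2 * (s ^ 2 * (t * u)) by ring, hs]
      linear_combination (-(1 - η)) * ht
    have D1 : Real.sqrt (1 - (C * (s * t)) ^ 2 - η ^ 2) = s * t * Real.sqrt (1 - C ^ 2) := by
      rw [d1, show s ^ 2 * t ^ 2 * (1 - C ^ 2) = (s * t) ^ 2 * (1 - C ^ 2) by ring,
        Real.sqrt_mul (by positivity), Real.sqrt_sq (by positivity)]
    have D2 : Real.sqrt (1 - (C * (s * u)) ^ 2 - η ^ 2)
        = s * Real.sqrt (1 + η - 2 * C ^ 2 * η) := by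
      rw [d2, Real.sqrt_mul (sq_nonneg s), Real.sqrt_sq hspos.le]
    rw [n1, D1, D2, div_eq_div_iff (by positivity) (by positivity)]
    ring
  · set g : ℝ → ℝ := fun η =>
      (Real.sqrt (1 + η) - C ^ 2 * Real.sqrt (2 * η)) /
        (Real.sqrt (1 - C ^ 2) * Real.sqrt (1 + η - 2 * C ^ 2 * η)) with hg_def
    have hg1 : g 1 = 1 := by
      have e1 : (1:ℝ) + 1 - 2 * C ^ 2 * 1 = 2 * (1 - C ^ 2) := by ring
      have e2 : (2:ℝ) * 1 = 1 + 1 := by norm_num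
      simp only [hg_def, e1, e2]
      rw [Real.sqrt_mul (by norm_num : (0:ℝ) ≤ 2)]
      have hsq : Real.sqrt (1 - C ^ 2) * Real.sqrt (1 - C ^ 2) = 1 - C ^ 2 :=
        Real.mul_self_sqrt hC2.le
      have hs2 : (0:ℝ) < Real.sqrt 2 := by positivity
      have ha : (0:ℝ) < Real.sqrt (1 - C ^ 2) := Real.sqrt_pos.mpr hC2
      rw [show (1:ℝ) + 1 = 2 by norm_num]
      rw [div_eq_one_iff_eq (by positivity)]
      nlinarith [hsq]
    have harc1 : arcosh 1 = 0 := by unfold arcosh; norm_num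
    have hArc : ContinuousAt arcosh 1 := by
      unfold arcosh
      apply ContinuousAt.log
      · exact (continuous_id.add (Real.continuous_sqrt.comp (by continuity))).continuousAt
      · norm_num
    have hg : ContinuousAt g 1 := by
      apply ContinuousAt.div
      · fun_prop
      · fun_prop
      · have h1 : (0:ℝ) < 1 + 1 - 2 * C ^ 2 * 1 := by nlinarith
        positivity
    have hcomp : ContinuousAt (fun η => arcosh (g η)) 1 := by
      have h' : ContinuousAt arcosh (g 1) := by rw [hg1]; exact hArc
      exact h'.comp hg
    have htend : Tendsto (fun η => arcosh (g η)) (nhdsWithin 1 (Set.Iio 1))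
        (nhds (arcosh (g 1))) := hcomp.tendsto.mono_left nhdsWithin_le_nhds
    rw [hg1, harc1] at htend
    exact htend
end

section
/- Let 0 < C < 1 and 0 < η < 1. Then 2·∫₀^η √(C² + 2t − 3C²t) / ( (1−t)(1 + t − 2C²t)·√(2t) ) dt = 2·( (1/√(1−C²))·artanh √( 2η(1−C²) / (C² + 2η − 3C²η) ) − artanh √( 2η(1−C²)² / (C² + 2η − 3C²η) ) ). (The left-hand side is the hyperbolic arc length of the boundary arc ∂^∪E^C_η of the h-elliptic parabola x²/C² + 2y² − 2y = 0 with y ≤ η, computed via the BCK arc length element.) -/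
lemma hasDerivAt_artanh {x : ℝ} (h1 : -1 < x) (h2 : x < 1) :
    HasDerivAt artanh (1 / (1 - x ^ 2)) x := by
  have hp : (0:ℝ) < 1 + x := by linarith
  have hm : (0:ℝ) < 1 - x := by linarith
  have hd : HasDerivAt (fun y : ℝ => (1 + y) / (1 - y))
      ((1 * (1 - x) - (1 + x) * (-1)) / (1 - x) ^ 2) x := by
    exact (((hasDerivAt_id x).const_add 1).div ((hasDerivAt_id x).const_sub 1) hm.ne')
  have hne : (1 + x) / (1 - x) ≠ 0 := by positivity
  have := (hd.log hne).div_const 2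
  unfold artanh
  refine this.congr_deriv ?_
  have hne2 : (1:ℝ) - x ^ 2 ≠ 0 := by nlinarith
  field_simp
  ring

lemma hasDerivAt_artanh_sqrt {g : ℝ → ℝ} {g' t : ℝ} (hg : HasDerivAt g g' t)
    (h0 : 0 < g t) (h1 : g t < 1) :
    HasDerivAt (fun s => artanh (Real.sqrt (g s)))
      (g' / (2 * Real.sqrt (g t) * (1 - g t))) t := by
  have hs : HasDerivAt (fun s => Real.sqrt (g s)) (1 / (2 * Real.sqrt (g t)) * g') t :=
    (Real.hasDerivAt_sqrt h0.ne').comp t hg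
  have hlt : Real.sqrt (g t) < 1 := by
    rw [show (1:ℝ) = Real.sqrt 1 by simp]
    exact Real.sqrt_lt_sqrt h0.le h1
  have hgt : (-1:ℝ) < Real.sqrt (g t) := lt_of_lt_of_le (by norm_num) (Real.sqrt_nonneg _)
  have hsq : Real.sqrt (g t) ^ 2 = g t := Real.sq_sqrt h0.le
  have hpos : 0 < Real.sqrt (g t) := Real.sqrt_pos.2 h0
  have := (hasDerivAt_artanh hgt hlt).comp t hs
  refine this.congr_deriv ?_
  rw [hsq]
  have hne2 : (1:ℝ) - g t ≠ 0 := by linarith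
  field_simp [hpos.ne']

lemma continuousOn_artanh_sqrt {g : ℝ → ℝ} {s : Set ℝ} (hg : ContinuousOn g s)
    (h1 : ∀ t ∈ s, 0 ≤ g t) (h2 : ∀ t ∈ s, g t < 1) :
    ContinuousOn (fun t => artanh (Real.sqrt (g t))) s := by
  unfold artanh
  have hlt : ∀ t ∈ s, Real.sqrt (g t) < 1 := by
    intro t ht
    rw [show (1:ℝ) = Real.sqrt 1 by simp]
    exact Real.sqrt_lt_sqrt (h1 t ht) (lt_of_lt_of_le (h2 t ht) (by norm_num))
  apply ContinuousOn.div_const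
  apply ContinuousOn.log
  · exact (continuousOn_const.add hg.sqrt).div (continuousOn_const.sub hg.sqrt)
      (fun t ht => by have := hlt t ht; have := Real.sqrt_nonneg (g t); intro hc; linarith [sub_eq_zero.mp hc])
  · intro t ht
    have h := hlt t ht
    have h' := Real.sqrt_nonneg (g t)
    apply div_ne_zero <;> intro hc
    · linarith
    · have := sub_eq_zero.mp hc; linarith

theorem arclength_truncated_h_elliptic_parabola (C η : ℝ) (hC0 : 0 < C) (hC1 : C < 1)
    (hη0 : 0 < η) (hη1 : η < 1) :
    2 * (∫ t in (0:ℝ)..η,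
        Real.sqrt (C ^ 2 + 2 * t - 3 * C ^ 2 * t) /
          ((1 - t) * (1 + t - 2 * C ^ 2 * t) * Real.sqrt (2 * t))) =
      2 * ((1 / Real.sqrt (1 - C ^ 2)) *
          artanh (Real.sqrt (2 * η * (1 - C ^ 2) / (C ^ 2 + 2 * η - 3 * C ^ 2 * η))) -
        artanh (Real.sqrt (2 * η * (1 - C ^ 2) ^ 2 / (C ^ 2 + 2 * η - 3 * C ^ 2 * η)))) := by
  have hC2 : C ^ 2 < 1 := by nlinarith
  have hC2p : 0 < C ^ 2 := by positivity
  have haP : (0:ℝ) < 1 - C ^ 2 := by linarith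
  set g₁ : ℝ → ℝ := fun t => 2 * t * (1 - C ^ 2) / (C ^ 2 + 2 * t - 3 * C ^ 2 * t) with hg₁def
  set g₂ : ℝ → ℝ := fun t => 2 * t * (1 - C ^ 2) ^ 2 / (C ^ 2 + 2 * t - 3 * C ^ 2 * t) with hg₂def
  set F : ℝ → ℝ := fun t =>
    (1 / Real.sqrt (1 - C ^ 2)) * artanh (Real.sqrt (g₁ t)) - artanh (Real.sqrt (g₂ t)) with hFdef
  have hD : ∀ t ∈ Set.Icc (0:ℝ) η, 0 < C ^ 2 + 2 * t - 3 * C ^ 2 * t := by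
    rintro t ⟨h0, h1⟩; nlinarith
  have hE : ∀ t ∈ Set.Icc (0:ℝ) η, 0 < 1 + t - 2 * C ^ 2 * t := by
    rintro t ⟨h0, h1⟩; nlinarith
  have h1t : ∀ t ∈ Set.Icc (0:ℝ) η, 0 < 1 - t := by
    rintro t ⟨h0, h1⟩; linarith
  have hg₁0 : ∀ t ∈ Set.Icc (0:ℝ) η, 0 ≤ g₁ t := by
    rintro t ⟨h0, h1⟩
    exact div_nonneg (by nlinarith) (hD t ⟨h0, h1⟩).le
  have hg₁1 : ∀ t ∈ Set.Icc (0:ℝ) η, g₁ t < 1 := by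
    rintro t ⟨h0, h1⟩
    rw [hg₁def]
    rw [div_lt_one (hD t ⟨h0, h1⟩)]
    nlinarith
  have hg₂0 : ∀ t ∈ Set.Icc (0:ℝ) η, 0 ≤ g₂ t := by
    rintro t ⟨h0, h1⟩
    exact div_nonneg (by nlinarith) (hD t ⟨h0, h1⟩).le
  have hg₂1 : ∀ t ∈ Set.Icc (0:ℝ) η, g₂ t < 1 := by
    rintro t ⟨h0, h1⟩
    rw [hg₂def, div_lt_one (hD t ⟨h0, h1⟩)]
    nlinarith [mul_pos hC2p (hE t ⟨h0, h1⟩)]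
  have hDcont : ContinuousOn (fun t : ℝ => C ^ 2 + 2 * t - 3 * C ^ 2 * t) (Set.Icc (0:ℝ) η) := by
    fun_prop
  have hg₁cont : ContinuousOn g₁ (Set.Icc (0:ℝ) η) := by
    apply ContinuousOn.div (by fun_prop) hDcont
    exact fun t ht => (hD t ht).ne'
  have hg₂cont : ContinuousOn g₂ (Set.Icc (0:ℝ) η) := by
    apply ContinuousOn.div (by fun_prop) hDcont
    exact fun t ht => (hD t ht).ne'
  have hFcont : ContinuousOn F (Set.Icc (0:ℝ) η) := by
    apply ContinuousOn.sub
    · exact continuousOn_const.mul (continuousOn_artanh_sqrt hg₁cont hg₁0 hg₁1)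
    · exact continuousOn_artanh_sqrt hg₂cont hg₂0 hg₂1
  have hderiv : ∀ t ∈ Set.Ioo (0:ℝ) η,
      HasDerivAt F (Real.sqrt (C ^ 2 + 2 * t - 3 * C ^ 2 * t) /
          ((1 - t) * (1 + t - 2 * C ^ 2 * t) * Real.sqrt (2 * t))) t := by
    rintro t ⟨ht0, htη⟩
    have ht' : t ∈ Set.Icc (0:ℝ) η := ⟨ht0.le, htη.le⟩
    have dpos := hD t ht'
    have epos := hE t ht'
    have tpos : (0:ℝ) < 1 - t := h1t t ht'
    have h2t : (0:ℝ) < 2 * t := by linarith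
    have hn1 : HasDerivAt (fun s : ℝ => 2 * s * (1 - C ^ 2)) (2 * (1 - C ^ 2)) t := by
      simpa using ((hasDerivAt_id t).const_mul 2).mul_const (1 - C ^ 2)
    have hn2 : HasDerivAt (fun s : ℝ => 2 * s * (1 - C ^ 2) ^ 2) (2 * (1 - C ^ 2) ^ 2) t := by
      simpa using ((hasDerivAt_id t).const_mul 2).mul_const ((1 - C ^ 2) ^ 2)
    have hdD : HasDerivAt (fun s : ℝ => C ^ 2 + 2 * s - 3 * C ^ 2 * s) (2 - 3 * C ^ 2) t := by
      have := (((hasDerivAt_id t).const_mul 2).const_add (C ^ 2)).sub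
        ((hasDerivAt_id t).const_mul (3 * C ^ 2))
      simp at this
      exact this
    have hg1d : HasDerivAt g₁ (2 * (1 - C ^ 2) * C ^ 2 / (C ^ 2 + 2 * t - 3 * C ^ 2 * t) ^ 2) t := by
      rw [hg₁def]
      refine (hn1.div hdD dpos.ne').congr_deriv ?_
      field_simp
      ring
    have hg2d : HasDerivAt g₂
        (2 * (1 - C ^ 2) ^ 2 * C ^ 2 / (C ^ 2 + 2 * t - 3 * C ^ 2 * t) ^ 2) t := by
      rw [hg₂def]
      refine (hn2.div hdD dpos.ne').congr_deriv ?_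
      field_simp
      ring
    have h01 : 0 < g₁ t := by
      rw [hg₁def]; exact div_pos (mul_pos h2t haP) dpos
    have h02 : 0 < g₂ t := by
      rw [hg₂def]; exact div_pos (mul_pos h2t (pow_pos haP 2)) dpos
    have hA1 := hasDerivAt_artanh_sqrt hg1d h01 (hg₁1 t ht')
    have hA2 := hasDerivAt_artanh_sqrt hg2d h02 (hg₂1 t ht')
    have hF := (hA1.const_mul (1 / Real.sqrt (1 - C ^ 2))).sub hA2
    have hs1 : Real.sqrt (g₁ t) =
        Real.sqrt (2 * t) * Real.sqrt (1 - C ^ 2) / Real.sqrt (C ^ 2 + 2 * t - 3 * C ^ 2 * t) := by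
      rw [hg₁def]
      simp only []
      rw [Real.sqrt_div (by positivity), Real.sqrt_mul (by positivity)]
    have hs2 : Real.sqrt (g₂ t) =
        Real.sqrt (2 * t) * (1 - C ^ 2) / Real.sqrt (C ^ 2 + 2 * t - 3 * C ^ 2 * t) := by
      rw [hg₂def]
      simp only []
      rw [Real.sqrt_div (by positivity), Real.sqrt_mul (by positivity),
        Real.sqrt_sq haP.le]
    have h1g1 : 1 - g₁ t = C ^ 2 * (1 - t) / (C ^ 2 + 2 * t - 3 * C ^ 2 * t) := by
      rw [hg₁def]
      rw [eq_div_iff dpos.ne', sub_mul, div_mul_cancel₀ _ dpos.ne']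
      ring
    have h1g2 : 1 - g₂ t =
        C ^ 2 * (1 + t - 2 * C ^ 2 * t) / (C ^ 2 + 2 * t - 3 * C ^ 2 * t) := by
      rw [hg₂def]
      rw [eq_div_iff dpos.ne', sub_mul, div_mul_cancel₀ _ dpos.ne']
      ring
    have spos : 0 < Real.sqrt (2 * t) := Real.sqrt_pos.2 h2t
    have apos : 0 < Real.sqrt (1 - C ^ 2) := Real.sqrt_pos.2 haP
    have ddpos : 0 < Real.sqrt (C ^ 2 + 2 * t - 3 * C ^ 2 * t) := Real.sqrt_pos.2 dpos
    have T1 : (1 / Real.sqrt (1 - C ^ 2)) *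
        ((2 * (1 - C ^ 2) * C ^ 2 / (C ^ 2 + 2 * t - 3 * C ^ 2 * t) ^ 2) /
          (2 * Real.sqrt (g₁ t) * (1 - g₁ t))) =
        Real.sqrt (C ^ 2 + 2 * t - 3 * C ^ 2 * t) /
          (Real.sqrt (2 * t) * (1 - t) * (C ^ 2 + 2 * t - 3 * C ^ 2 * t)) := by
      have had : Real.sqrt (1 - C ^ 2) ^ 2 = 1 - C ^ 2 := Real.sq_sqrt haP.le
      rw [hs1, h1g1]
      field_simp
      rw [had]
    have T2 : (2 * (1 - C ^ 2) ^ 2 * C ^ 2 / (C ^ 2 + 2 * t - 3 * C ^ 2 * t) ^ 2) /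
          (2 * Real.sqrt (g₂ t) * (1 - g₂ t)) =
        (1 - C ^ 2) * Real.sqrt (C ^ 2 + 2 * t - 3 * C ^ 2 * t) /
          (Real.sqrt (2 * t) * (1 + t - 2 * C ^ 2 * t) * (C ^ 2 + 2 * t - 3 * C ^ 2 * t)) := by
      rw [hs2, h1g2]
      field_simp
    rw [hFdef]
    refine hF.congr_deriv ?_
    rw [T1, T2]
    rw [div_sub_div _ _ (by positivity) (by positivity), div_eq_div_iff (by positivity) (by positivity)]
    ring
  have hint : IntervalIntegrable (fun t => Real.sqrt (C ^ 2 + 2 * t - 3 * C ^ 2 * t) /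
          ((1 - t) * (1 + t - 2 * C ^ 2 * t) * Real.sqrt (2 * t))) MeasureTheory.volume 0 η := by
    have hmono : Set.uIcc (0:ℝ) η = Set.Icc 0 η := Set.uIcc_of_le hη0.le
    have hcont2 : ContinuousOn (fun t : ℝ => Real.sqrt (C ^ 2 + 2 * t - 3 * C ^ 2 * t) /
        ((1 - t) * (1 + t - 2 * C ^ 2 * t) * Real.sqrt 2)) (Set.uIcc 0 η) := by
      rw [hmono]
      apply ContinuousOn.div hDcont.sqrt (by fun_prop)
      intro t ht
      have h1 := h1t t ht
      have h2 := hE t ht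
      positivity
    have hbase := (intervalIntegral.intervalIntegrable_rpow' (a := 0) (b := η)
      (r := -(1/2)) (by norm_num)).continuousOn_mul hcont2
    rw [intervalIntegrable_iff_integrableOn_Ioc_of_le hη0.le] at hbase ⊢
    apply hbase.congr_fun _ measurableSet_Ioc
    rintro t ⟨ht0, htη⟩
    simp only []
    rw [Real.sqrt_mul (by norm_num : (0:ℝ) ≤ 2), Real.rpow_neg ht0.le, Real.sqrt_eq_rpow t,
      ← div_eq_mul_inv, div_div]
    congr 1
    ring
  have := intervalIntegral.integral_eq_sub_of_hasDerivAt_of_le hη0.le hFcont hderiv hint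
  rw [this]
  have hF0 : F 0 = 0 := by
    rw [hFdef]
    simp only [hg₁def, hg₂def]
    norm_num [artanh]
  rw [hF0, sub_zero, hFdef]
end

section
/- Let 0 < C < 1. Define L_B(η) = (2/√(1−C²))·artanh η + 2·artanh C and L_E(η) = 2·( (1/√(1−C²))·artanh √(2η(1−C²)/(C²+2η−3C²η)) − artanh √(2η(1−C²)²/(C²+2η−3C²η)) ). Then lim_{η→1⁻} ( L_B(η) − L_E(η) ) = (2/√(1−C²))·ln( C/(2√(1−C²)) ) + 2·artanh √(1−C²) + 2·artanh C. -/
open Filter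

lemma artanh_contAt {x : ℝ} (h1 : -1 < x) (h2 : x < 1) : ContinuousAt artanh x := by
  unfold artanh
  have h : ContinuousAt (fun x : ℝ => (1 + x) / (1 - x)) x :=
    ContinuousAt.div (by fun_prop) (by fun_prop) (by linarith)
  exact (h.log (ne_of_gt (div_pos (by linarith : (0:ℝ) < 1 + x)
    (by linarith : (0:ℝ) < 1 - x)))).div_const _

theorem circumference_difference_limit (C : ℝ) (hC0 : 0 < C) (hC1 : C < 1)
    (LB LE : ℝ → ℝ)
    (hLB : ∀ η, LB η = 2 / Real.sqrt (1 - C ^ 2) * artanh η + 2 * artanh C)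
    (hLE : ∀ η, LE η = 2 * ((1 / Real.sqrt (1 - C ^ 2)) *
          artanh (Real.sqrt (2 * η * (1 - C ^ 2) / (C ^ 2 + 2 * η - 3 * C ^ 2 * η))) -
        artanh (Real.sqrt (2 * η * (1 - C ^ 2) ^ 2 / (C ^ 2 + 2 * η - 3 * C ^ 2 * η))))) :
    Tendsto (fun η => LB η - LE η) (nhdsWithin 1 (Set.Iio 1))
      (nhds (2 / Real.sqrt (1 - C ^ 2) * Real.log (C / (2 * Real.sqrt (1 - C ^ 2))) +
        2 * artanh (Real.sqrt (1 - C ^ 2)) + 2 * artanh C)) := by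
  have hC2 : (0:ℝ) < 1 - C ^ 2 := by nlinarith
  set t := Real.sqrt (1 - C ^ 2) with ht
  have ht0 : 0 < t := Real.sqrt_pos.mpr hC2
  have ht2 : t ^ 2 = 1 - C ^ 2 := Real.sq_sqrt hC2.le
  have ht1 : t < 1 := by nlinarith
  set F : ℝ → ℝ := fun η =>
    (1 / t) * Real.log ((1 + η) * C ^ 2 / ((C ^ 2 + 2 * η - 3 * C ^ 2 * η) *
      (1 + Real.sqrt (2 * η * (1 - C ^ 2) / (C ^ 2 + 2 * η - 3 * C ^ 2 * η))) ^ 2)) +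
    2 * artanh (Real.sqrt (2 * η * (1 - C ^ 2) ^ 2 / (C ^ 2 + 2 * η - 3 * C ^ 2 * η))) +
    2 * artanh C with hFdef
  have hD1 : C ^ 2 + 2 * (1:ℝ) - 3 * C ^ 2 * 1 = 2 * (1 - C ^ 2) := by ring
  have hu1 : Real.sqrt (2 * (1:ℝ) * (1 - C ^ 2) / (C ^ 2 + 2 * 1 - 3 * C ^ 2 * 1)) = 1 := by
    rw [show 2 * (1:ℝ) * (1 - C ^ 2) / (C ^ 2 + 2 * 1 - 3 * C ^ 2 * 1) = 1 by
      rw [hD1]; field_simp]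
    exact Real.sqrt_one
  have hv1 : Real.sqrt (2 * (1:ℝ) * (1 - C ^ 2) ^ 2 / (C ^ 2 + 2 * 1 - 3 * C ^ 2 * 1)) = t := by
    rw [show 2 * (1:ℝ) * (1 - C ^ 2) ^ 2 / (C ^ 2 + 2 * 1 - 3 * C ^ 2 * 1) = 1 - C ^ 2 by
      rw [hD1]; field_simp]
  -- value of F at 1
  have hF1 : F 1 = 2 / t * Real.log (C / (2 * t)) + 2 * artanh t + 2 * artanh C := by
    rw [hFdef]
    simp only
    rw [hu1, hv1, hD1]
    have harg : (1 + (1:ℝ)) * C ^ 2 / (2 * (1 - C ^ 2) * (1 + 1) ^ 2)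
        = (C / (2 * t)) ^ 2 := by
      rw [div_pow]; rw [show (2 * t) ^ 2 = 4 * (1 - C ^ 2) by nlinarith]
      field_simp; ring
    rw [harg, Real.log_pow]
    push_cast
    ring
  -- continuity of F at 1
  have hcont : ContinuousAt F 1 := by
    have hDc : ContinuousAt (fun η : ℝ => C ^ 2 + 2 * η - 3 * C ^ 2 * η) 1 := by fun_prop
    have hDne : C ^ 2 + 2 * (1:ℝ) - 3 * C ^ 2 * 1 ≠ 0 := by rw [hD1]; positivity
    have huc : ContinuousAt
        (fun η : ℝ => Real.sqrt (2 * η * (1 - C ^ 2) / (C ^ 2 + 2 * η - 3 * C ^ 2 * η))) 1 := by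
      apply Real.continuous_sqrt.continuousAt.comp
      exact ContinuousAt.div (by fun_prop) hDc hDne
    have hvc : ContinuousAt
        (fun η : ℝ => Real.sqrt (2 * η * (1 - C ^ 2) ^ 2 / (C ^ 2 + 2 * η - 3 * C ^ 2 * η))) 1 := by
      apply Real.continuous_sqrt.continuousAt.comp
      exact ContinuousAt.div (by fun_prop) hDc hDne
    apply ContinuousAt.add
    apply ContinuousAt.add
    · apply ContinuousAt.mul continuousAt_const
      apply ContinuousAt.comp (g := Real.log)
      · apply Real.continuousAt_log
        rw [hu1, hD1]
        positivity
      · apply ContinuousAt.div (by fun_prop) _ _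
        · exact hDc.mul (((continuousAt_const.add huc).pow 2))
        · rw [hu1, hD1]; positivity
    · apply ContinuousAt.mul continuousAt_const
      apply ContinuousAt.comp (g := artanh) _ hvc
      rw [hv1]
      exact artanh_contAt (by linarith) ht1
    · exact continuousAt_const
  have htend : Tendsto F (nhdsWithin 1 (Set.Iio 1)) (nhds (F 1)) :=
    hcont.continuousWithinAt.tendsto
  rw [hF1] at htend
  refine htend.congr' ?_
  filter_upwards [Ioo_mem_nhdsLT_of_mem (⟨zero_lt_one, le_refl (1:ℝ)⟩ : (1:ℝ) ∈ Set.Ioc 0 1)]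
    with η hη
  obtain ⟨hη0, hη1⟩ := hη
  -- now prove F η = LB η - LE η
  set D := C ^ 2 + 2 * η - 3 * C ^ 2 * η with hDdef
  have hD : 0 < D := by nlinarith
  set u := Real.sqrt (2 * η * (1 - C ^ 2) / D) with hudef
  set v := Real.sqrt (2 * η * (1 - C ^ 2) ^ 2 / D) with hvdef
  have hu0 : 0 ≤ u := Real.sqrt_nonneg _
  have hu2 : u ^ 2 = 2 * η * (1 - C ^ 2) / D := Real.sq_sqrt (by positivity)
  have husq : u ^ 2 < 1 := by
    rw [hu2, div_lt_one hD]
    nlinarith [mul_pos (pow_pos hC0 2) (sub_pos.mpr hη1)]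
  have hult : u < 1 := by nlinarith
  have key : u ^ 2 * D = 2 * η * (1 - C ^ 2) := by
    rw [hu2]; field_simp
  -- log identity
  have hlog : Real.log ((1 + η) / (1 - η)) - Real.log ((1 + u) / (1 - u))
      = Real.log ((1 + η) * C ^ 2 / (D * (1 + u) ^ 2)) := by
    have hfact : (1 - u ^ 2) * D = C ^ 2 * (1 - η) := by
      rw [hDdef] at key ⊢; linear_combination -key
    rw [← Real.log_div (ne_of_gt (div_pos (by linarith) (by linarith)))
      (ne_of_gt (div_pos (by linarith) (by linarith)))]
    congr 1
    have h1 : (1:ℝ) - η ≠ 0 := by linarith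
    have h2 : (1:ℝ) + u ≠ 0 := by linarith
    have h3 : (1:ℝ) - u ≠ 0 := by linarith
    field_simp
    linear_combination (1 + η) * hfact + η * key
  rw [hLB, hLE]
  rw [hFdef]
  simp only
  rw [← hudef, ← hvdef, ← hDdef]
  have expand : artanh η = Real.log ((1 + η) / (1 - η)) / 2 := rfl
  have expandu : artanh u = Real.log ((1 + u) / (1 - u)) / 2 := rfl
  rw [expand, expandu] at *
  have : Real.log ((1 + η) * C ^ 2 / (D * (1 + u) ^ 2))
      = Real.log ((1 + η) / (1 - η)) - Real.log ((1 + u) / (1 - u)) := hlog.symm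
  rw [this]
  field_simp
  ring
end

section
/- Define G(C) = (2/√(1−C²))·ln( C/(2√(1−C²)) ) + 2·artanh √(1−C²) + 2·artanh C for C ∈ (0,1). Then G is strictly increasing on (0,1), lim_{C→0⁺} G(C) = 0, and lim_{C→1⁻} G(C) = +∞. -/
open Filter
open Real hiding artanh

lemma hasDerivAt_G (x : ℝ) (hx0 : 0 < x) (hx1 : x < 1) :
    HasDerivAt (fun C => 2 / Real.sqrt (1 - C ^ 2) * Real.log (C / (2 * Real.sqrt (1 - C ^ 2))) +
      2 * artanh (Real.sqrt (1 - C ^ 2)) + 2 * artanh C)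
    (2 * x / Real.sqrt (1 - x ^ 2) ^ 3 *
      (1 + Real.sqrt (1 - x ^ 2) / x + Real.log (x / (2 * Real.sqrt (1 - x ^ 2))))) x := by
  have h2 : (0:ℝ) < 1 - x ^ 2 := by nlinarith
  set s := Real.sqrt (1 - x ^ 2) with hs_def
  have hs : 0 < s := Real.sqrt_pos.2 h2
  have hssq : s ^ 2 = 1 - x ^ 2 := Real.sq_sqrt h2.le
  have hs1 : s < 1 := by nlinarith
  have hsne : s ≠ 0 := hs.ne'
  have hxne : x ≠ 0 := hx0.ne'
  have hbd : (0:ℝ) < 1 - s := by linarith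
  have hbdne : (1:ℝ) - s ≠ 0 := hbd.ne'
  have hbs : (0:ℝ) < 1 + s := by linarith
  have hbsne : (1:ℝ) + s ≠ 0 := hbs.ne'
  have hcd : (0:ℝ) < 1 - x := by linarith
  have hcdne : (1:ℝ) - x ≠ 0 := hcd.ne'
  have hcs : (0:ℝ) < 1 + x := by linarith
  have hcsne : (1:ℝ) + x ≠ 0 := hcs.ne'
  have h1 : HasDerivAt (fun C : ℝ => 1 - C ^ 2) (-(2 * x)) x := by
    simpa using (hasDerivAt_pow 2 x).const_sub 1
  have hsq : HasDerivAt (fun C : ℝ => Real.sqrt (1 - C ^ 2)) (-(2 * x) / (2 * s)) x :=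
    h1.sqrt h2.ne'
  have A1 : HasDerivAt (fun C : ℝ => 2 / Real.sqrt (1 - C ^ 2)) (2 * x / s ^ 3) x := by
    refine ((hasDerivAt_const x (2:ℝ)).div hsq hsne).congr_deriv ?_
    symm
    simp only [Pi.div_apply, id, ← hs_def]
    field_simp
    ring
  have hinner : (0:ℝ) < x / (2 * s) := by positivity
  have A3 : HasDerivAt (fun C : ℝ => Real.log (C / (2 * Real.sqrt (1 - C ^ 2))))
      (1 / x + x / s ^ 2) x := by
    refine (((hasDerivAt_id x).div (hsq.const_mul 2) (by positivity)).log hinner.ne').congr_deriv ?_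
    symm
    simp only [Pi.div_apply, id, ← hs_def]
    field_simp; ring
  have A := A1.mul A3
  have Bnum : HasDerivAt (fun C : ℝ => 1 + Real.sqrt (1 - C ^ 2)) (-(2 * x) / (2 * s)) x :=
    hsq.const_add 1
  have Bden : HasDerivAt (fun C : ℝ => 1 - Real.sqrt (1 - C ^ 2)) (-(-(2 * x) / (2 * s))) x :=
    hsq.const_sub 1
  have hbq : (0:ℝ) < (1 + s) / (1 - s) := by positivity
  have B : HasDerivAt (fun C : ℝ =>
      2 * (Real.log ((1 + Real.sqrt (1 - C ^ 2)) / (1 - Real.sqrt (1 - C ^ 2))) / 2))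
      (-2 / (s * x)) x := by
    refine ((((Bnum.div Bden hbdne).log hbq.ne').div_const 2).const_mul 2).congr_deriv ?_
    symm
    simp only [Pi.div_apply, id, ← hs_def]
    have h1s : (1:ℝ) - s ^ 2 = x ^ 2 := by linarith
    have h1sne : (1:ℝ) - s ^ 2 ≠ 0 := by rw [h1s]; positivity
    have e1 : -2 / (s * x) = -2 * x / (s * (1 - s ^ 2)) := by
      rw [h1s]; field_simp
    rw [e1]; field_simp; ring
  have cnum : HasDerivAt (fun C : ℝ => 1 + C) 1 x := by
    simpa using (hasDerivAt_id x).const_add 1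
  have cden : HasDerivAt (fun C : ℝ => 1 - C) (-1) x := by
    simpa using (hasDerivAt_id x).const_sub 1
  have hcq : (0:ℝ) < (1 + x) / (1 - x) := by positivity
  have Cc : HasDerivAt (fun C : ℝ => 2 * (Real.log ((1 + C) / (1 - C)) / 2)) (2 / s ^ 2) x := by
    refine ((((cnum.div cden hcdne).log hcq.ne').div_const 2).const_mul 2).congr_deriv ?_
    symm
    simp only [Pi.div_apply, id, ← hs_def]
    rw [hssq]; field_simp; ring
  have total := (A.add B).add Cc
  have goal : HasDerivAt (fun C => 2 / Real.sqrt (1 - C ^ 2) *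
      Real.log (C / (2 * Real.sqrt (1 - C ^ 2))) +
      2 * artanh (Real.sqrt (1 - C ^ 2)) + 2 * artanh C) _ x := total
  convert goal using 1
  field_simp
  ring


lemma Gaux_deriv_pos (x : ℝ) (hx0 : 0 < x) (hx1 : x < 1) :
    0 < 2 * x / Real.sqrt (1 - x ^ 2) ^ 3 *
      (1 + Real.sqrt (1 - x ^ 2) / x + Real.log (x / (2 * Real.sqrt (1 - x ^ 2)))) := by
  have h2 : (0:ℝ) < 1 - x ^ 2 := by nlinarith
  set s := Real.sqrt (1 - x ^ 2) with hs_def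
  have hs : 0 < s := Real.sqrt_pos.2 h2
  have l1 : Real.log (s / x) ≤ s / x - 1 := Real.log_le_sub_one_of_pos (by positivity)
  have l2 : Real.log (s / x) = Real.log s - Real.log x := Real.log_div hs.ne' hx0.ne'
  have l3 : Real.log (x / (2 * s)) = Real.log x - (Real.log 2 + Real.log s) := by
    rw [Real.log_div hx0.ne' (by positivity), Real.log_mul two_ne_zero hs.ne']
  have l4 : Real.log 2 < 1 := by
    have := Real.log_lt_sub_one_of_pos (by norm_num : (0:ℝ) < 2) (by norm_num)
    linarith
  have hf2 : 0 < 1 + s / x + Real.log (x / (2 * s)) := by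
    rw [l3]; linarith
  have hf1 : 0 < 2 * x / s ^ 3 := by positivity
  exact mul_pos hf1 hf2


lemma Gaux_tendsto_zero :
    Tendsto (fun C : ℝ => 2 / Real.sqrt (1 - C ^ 2) * Real.log (C / (2 * Real.sqrt (1 - C ^ 2))) +
      2 * artanh (Real.sqrt (1 - C ^ 2)) + 2 * artanh C) (nhdsWithin 0 (Set.Ioi 0)) (nhds 0) := by
  set T : ℝ → ℝ := fun C =>
    Real.log C * C * (2 * C / (Real.sqrt (1 - C ^ 2) * (1 + Real.sqrt (1 - C ^ 2)))) +
    (2 * Real.log (1 + Real.sqrt (1 - C ^ 2)) -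
      2 / Real.sqrt (1 - C ^ 2) * Real.log (2 * Real.sqrt (1 - C ^ 2))) + 2 * artanh C
    with hT
  have heq : (fun C : ℝ => 2 / Real.sqrt (1 - C ^ 2) * Real.log (C / (2 * Real.sqrt (1 - C ^ 2))) +
        2 * artanh (Real.sqrt (1 - C ^ 2)) + 2 * artanh C) =ᶠ[nhdsWithin (0:ℝ) (Set.Ioi 0)] T := by
    have hIoo : Set.Ioo (0:ℝ) 1 ∈ nhdsWithin (0:ℝ) (Set.Ioi 0) := by
      rw [show Set.Ioo (0:ℝ) 1 = Set.Iio 1 ∩ Set.Ioi 0 by ext y; simp [and_comm]]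
      exact Filter.inter_mem (nhdsWithin_le_nhds (Iio_mem_nhds (by norm_num)))
        self_mem_nhdsWithin
    filter_upwards [hIoo] with C hC
    obtain ⟨hC0, hC1⟩ := hC
    have h2 : (0:ℝ) < 1 - C ^ 2 := by nlinarith
    set t := Real.sqrt (1 - C ^ 2) with ht_def
    have ht : 0 < t := Real.sqrt_pos.2 h2
    have htsq : t ^ 2 = 1 - C ^ 2 := Real.sq_sqrt h2.le
    have ht1 : t < 1 := by nlinarith
    have e2 : (1 - t) * (1 + t) = C ^ 2 := by nlinarith
    have elog1 : Real.log (C / (2 * t)) = Real.log C - Real.log (2 * t) :=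
      Real.log_div hC0.ne' (by positivity)
    have elogm : Real.log (1 - t) = 2 * Real.log C - Real.log (1 + t) := by
      have e3 : (1:ℝ) - t = C ^ 2 / (1 + t) := by
        field_simp
        linarith [e2]
      rw [e3, Real.log_div (pow_ne_zero 2 hC0.ne') (by positivity), Real.log_pow]
      push_cast; ring
    have h2a : 2 * artanh t = 2 * Real.log (1 + t) - 2 * Real.log C := by
      have htm : (1:ℝ) - t ≠ 0 := by
        have : (0:ℝ) < 1 - t := by linarith
        exact this.ne'
      rw [artanh, Real.log_div (by positivity) htm, elogm]; ring
    rw [hT]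
    simp only
    rw [elog1, h2a]
    have hcoef : 2 / t - 2 = 2 * C * C / (t * (1 + t)) := by
      field_simp
      linear_combination e2
    linear_combination Real.log C * hcoef
  refine Tendsto.congr' heq.symm ?_
  have hsc : Continuous (fun C : ℝ => Real.sqrt (1 - C ^ 2)) := by fun_prop
  have p1 : Tendsto (fun C : ℝ => Real.log C * C) (nhdsWithin 0 (Set.Ioi 0)) (nhds 0) := by
    have := Real.continuous_mul_log.tendsto 0
    simp only [zero_mul] at this
    exact (this.comp tendsto_id).mono_left nhdsWithin_le_nhds |>.congr (by
      intro x; simp [mul_comm])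
  have p2 : Tendsto (fun C : ℝ => 2 * C / (Real.sqrt (1 - C ^ 2) * (1 + Real.sqrt (1 - C ^ 2))))
      (nhdsWithin 0 (Set.Ioi 0)) (nhds 0) := by
    have hc : ContinuousAt (fun C : ℝ => 2 * C / (Real.sqrt (1 - C ^ 2) *
        (1 + Real.sqrt (1 - C ^ 2)))) 0 := by
      apply ContinuousAt.div (by fun_prop) (by fun_prop)
      norm_num [Real.sqrt_one]
    have := hc.tendsto.mono_left (nhdsWithin_le_nhds (s := Set.Ioi 0))
    simpa using this
  have p3 : Tendsto (fun C : ℝ => 2 * Real.log (1 + Real.sqrt (1 - C ^ 2)) -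
      2 / Real.sqrt (1 - C ^ 2) * Real.log (2 * Real.sqrt (1 - C ^ 2)))
      (nhdsWithin 0 (Set.Ioi 0)) (nhds 0) := by
    have hc : ContinuousAt (fun C : ℝ => 2 * Real.log (1 + Real.sqrt (1 - C ^ 2)) -
        2 / Real.sqrt (1 - C ^ 2) * Real.log (2 * Real.sqrt (1 - C ^ 2))) 0 := by
      apply ContinuousAt.sub
      · exact (continuousAt_const.mul ((Real.continuousAt_log (by
          norm_num [Real.sqrt_one])).comp (by fun_prop)))
      · apply ContinuousAt.mul
        · exact ContinuousAt.div continuousAt_const (by fun_prop) (by norm_num [Real.sqrt_one])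
        · exact ((Real.continuousAt_log (by norm_num [Real.sqrt_one])).comp (by fun_prop))
    have := hc.tendsto.mono_left (nhdsWithin_le_nhds (s := Set.Ioi 0))
    convert this using 2
    norm_num [Real.sqrt_one]
  have p4 : Tendsto (fun C : ℝ => 2 * artanh C) (nhdsWithin 0 (Set.Ioi 0)) (nhds 0) := by
    have hc : ContinuousAt (fun C : ℝ => 2 * artanh C) 0 := by
      apply continuousAt_const.mul
      show ContinuousAt (fun C : ℝ => Real.log ((1 + C) / (1 - C)) / 2) 0
      apply ContinuousAt.div _ continuousAt_const (by norm_num)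
      exact (Real.continuousAt_log (by norm_num)).comp
        (ContinuousAt.div (by fun_prop) (by fun_prop) (by norm_num))
    have := hc.tendsto.mono_left (nhdsWithin_le_nhds (s := Set.Ioi 0))
    simpa [artanh] using this
  have := ((p1.mul p2).add p3).add p4
  simpa using this


lemma Gaux_tendsto_atTop :
    Tendsto (fun C : ℝ => 2 / Real.sqrt (1 - C ^ 2) * Real.log (C / (2 * Real.sqrt (1 - C ^ 2))) +
      2 * artanh (Real.sqrt (1 - C ^ 2)) + 2 * artanh C) (nhdsWithin 1 (Set.Iio 1)) atTop := by
  have hIoo : Set.Ioo (0:ℝ) 1 ∈ nhdsWithin (1:ℝ) (Set.Iio 1) := by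
    rw [show Set.Ioo (0:ℝ) 1 = Set.Ioi 0 ∩ Set.Iio 1 by rfl]
    exact Filter.inter_mem (nhdsWithin_le_nhds (Ioi_mem_nhds (by norm_num)))
      self_mem_nhdsWithin
  -- s tends to 0 within Ioi 0
  have hs0 : Tendsto (fun C : ℝ => Real.sqrt (1 - C ^ 2)) (nhdsWithin 1 (Set.Iio 1))
      (nhdsWithin 0 (Set.Ioi 0)) := by
    rw [tendsto_nhdsWithin_iff]
    constructor
    · have hc : ContinuousAt (fun C : ℝ => Real.sqrt (1 - C ^ 2)) 1 := by fun_prop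
      have := hc.tendsto.mono_left (nhdsWithin_le_nhds (s := Set.Iio 1))
      simpa using this
    · filter_upwards [hIoo] with C hC
      have : (0:ℝ) < 1 - C ^ 2 := by nlinarith [hC.1, hC.2]
      exact Real.sqrt_pos.2 this
  -- term 1 : (2/s) * log (C/(2s)) → ∞
  have inv_s : Tendsto (fun C : ℝ => (Real.sqrt (1 - C ^ 2))⁻¹) (nhdsWithin 1 (Set.Iio 1))
      atTop := tendsto_inv_nhdsGT_zero.comp hs0
  have t1a : Tendsto (fun C : ℝ => 2 / Real.sqrt (1 - C ^ 2)) (nhdsWithin 1 (Set.Iio 1))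
      atTop := by
    simp only [div_eq_mul_inv]
    exact inv_s.const_mul_atTop (by norm_num)
  have inv_2s : Tendsto (fun C : ℝ => (2 * Real.sqrt (1 - C ^ 2))⁻¹) (nhdsWithin 1 (Set.Iio 1))
      atTop := by
    have h2s : Tendsto (fun C : ℝ => 2 * Real.sqrt (1 - C ^ 2)) (nhdsWithin 1 (Set.Iio 1))
        (nhdsWithin 0 (Set.Ioi 0)) := by
      rw [tendsto_nhdsWithin_iff] at hs0 ⊢
      refine ⟨by simpa using hs0.1.const_mul 2, ?_⟩
      filter_upwards [hs0.2] with C hC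
      exact mul_pos two_pos (Set.mem_Ioi.mp hC)
    exact tendsto_inv_nhdsGT_zero.comp h2s
  have hCto1 : Tendsto (fun C : ℝ => C) (nhdsWithin 1 (Set.Iio 1)) (nhds 1) :=
    tendsto_id.mono_left nhdsWithin_le_nhds
  have t1b : Tendsto (fun C : ℝ => C / (2 * Real.sqrt (1 - C ^ 2))) (nhdsWithin 1 (Set.Iio 1))
      atTop := by
    simp only [div_eq_mul_inv]
    exact Filter.Tendsto.pos_mul_atTop one_pos hCto1 inv_2s
  have t1 : Tendsto (fun C : ℝ => 2 / Real.sqrt (1 - C ^ 2) *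
      Real.log (C / (2 * Real.sqrt (1 - C ^ 2)))) (nhdsWithin 1 (Set.Iio 1)) atTop :=
    t1a.atTop_mul_atTop₀ (Real.tendsto_log_atTop.comp t1b)
  -- term 2 : 2 * artanh s → 0
  have t2 : Tendsto (fun C : ℝ => 2 * artanh (Real.sqrt (1 - C ^ 2)))
      (nhdsWithin 1 (Set.Iio 1)) (nhds 0) := by
    have hc : ContinuousAt (fun y : ℝ => 2 * artanh y) 0 := by
      apply continuousAt_const.mul
      show ContinuousAt (fun y : ℝ => Real.log ((1 + y) / (1 - y)) / 2) 0
      apply ContinuousAt.div _ continuousAt_const (by norm_num)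
      exact (Real.continuousAt_log (by norm_num)).comp
        (ContinuousAt.div (by fun_prop) (by fun_prop) (by norm_num))
    have := hc.tendsto.comp (hs0.mono_right nhdsWithin_le_nhds)
    simpa [artanh, Function.comp_def] using this
  -- term 3 : 2 * artanh C → ∞
  have t3 : Tendsto (fun C : ℝ => 2 * artanh C) (nhdsWithin 1 (Set.Iio 1)) atTop := by
    have hinv : Tendsto (fun C : ℝ => (1 - C)⁻¹) (nhdsWithin 1 (Set.Iio 1)) atTop := by
      apply tendsto_inv_nhdsGT_zero.comp
      rw [tendsto_nhdsWithin_iff]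
      constructor
      · have hc : ContinuousAt (fun C : ℝ => 1 - C) 1 := by fun_prop
        have := hc.tendsto.mono_left (nhdsWithin_le_nhds (s := Set.Iio 1))
        simpa using this
      · filter_upwards [self_mem_nhdsWithin] with C hC
        simpa using hC
    have hnum : Tendsto (fun C : ℝ => 1 + C) (nhdsWithin 1 (Set.Iio 1)) (nhds 2) := by
      have hc : ContinuousAt (fun C : ℝ => 1 + C) 1 := by fun_prop
      have := hc.tendsto.mono_left (nhdsWithin_le_nhds (s := Set.Iio 1))
      norm_num at this
      exact this
    have hq : Tendsto (fun C : ℝ => (1 + C) / (1 - C)) (nhdsWithin 1 (Set.Iio 1)) atTop := by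
      simp only [div_eq_mul_inv]
      exact Filter.Tendsto.pos_mul_atTop two_pos hnum hinv
    have hl := Real.tendsto_log_atTop.comp hq
    have := (hl.atTop_div_const two_pos).const_mul_atTop (show (0:ℝ) < 2 by norm_num)
    simpa [artanh, Function.comp] using this
  exact Filter.Tendsto.atTop_add_atTop (t1.atTop_add t2) t3

theorem G_properties (G : ℝ → ℝ)
    (hG : ∀ C, G C = 2 / Real.sqrt (1 - C ^ 2) * Real.log (C / (2 * Real.sqrt (1 - C ^ 2))) +
      2 * artanh (Real.sqrt (1 - C ^ 2)) + 2 * artanh C) :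
    StrictMonoOn G (Set.Ioo 0 1) ∧
    Tendsto G (nhdsWithin 0 (Set.Ioi 0)) (nhds 0) ∧
    Tendsto G (nhdsWithin 1 (Set.Iio 1)) atTop := by
  have hfun : G = fun C => 2 / Real.sqrt (1 - C ^ 2) *
      Real.log (C / (2 * Real.sqrt (1 - C ^ 2))) +
      2 * artanh (Real.sqrt (1 - C ^ 2)) + 2 * artanh C := funext hG
  subst hfun
  refine ⟨?_, Gaux_tendsto_zero, Gaux_tendsto_atTop⟩
  apply strictMonoOn_of_deriv_pos (convex_Ioo 0 1)
  · intro x hx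
    exact (hasDerivAt_G x hx.1 hx.2).continuousAt.continuousWithinAt
  · intro x hx
    rw [interior_Ioo] at hx
    rw [(hasDerivAt_G x hx.1 hx.2).deriv]
    exact Gaux_deriv_pos x hx.1 hx.2
end

section
/- Define G'(C) = 2·(ln C − ln 2)/√(1−C²) + 2·artanh √(1−C²) + 2·C/√(1−C²) for C ∈ (0,1). Then G' is strictly increasing on (0,1), lim_{C→0⁺} G'(C) = 0, and lim_{C→1⁻} G'(C) = +∞. -/
open Filter

private lemma xlogx {x : ℝ} (hx : 0 < x) : -(Real.exp 1)⁻¹ ≤ x * Real.log x := by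
  have he : (0:ℝ) < Real.exp 1 := Real.exp_pos 1
  have h := Real.log_le_sub_one_of_pos (show (0:ℝ) < 1/(Real.exp 1 * x) by positivity)
  rw [Real.log_div one_ne_zero (by positivity), Real.log_mul he.ne' hx.ne', Real.log_one,
    Real.log_exp] at h
  have h2 : -Real.log x ≤ 1/(Real.exp 1 * x) := by linarith
  have h3 : -(x * Real.log x) ≤ x * (1/(Real.exp 1 * x)) := by
    have := mul_le_mul_of_nonneg_left h2 hx.le
    linarith [this]
  have h4 : x * (1/(Real.exp 1 * x)) = (Real.exp 1)⁻¹ := by field_simp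
  linarith [h3, h4.le]

private lemma numer_pos {C : ℝ} (hC0 : 0 < C) (hC1 : C < 1) :
    0 < 1 + C * (Real.log C - Real.log 2) := by
  have h2 : (0:ℝ) < C/2 := by linarith
  have h := xlogx h2
  have hlog : Real.log (C/2) = Real.log C - Real.log 2 :=
    Real.log_div hC0.ne' two_ne_zero
  have he : (2.7182818283:ℝ) < Real.exp 1 := Real.exp_one_gt_d9
  have hinv : (Real.exp 1)⁻¹ < 1/2 := by
    rw [inv_lt_iff_one_lt_mul₀ (by positivity)]
    nlinarith
  have : C * (Real.log C - Real.log 2) = 2 * ((C/2) * Real.log (C/2)) := by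
    rw [hlog]; ring
  nlinarith [h, hinv]

private lemma hasDeriv_f {C : ℝ} (hC0 : 0 < C) (hC1 : C < 1) :
    HasDerivAt (fun x => 2*(Real.log x - Real.log 2)/Real.sqrt (1-x^2) +
      2*(Real.log (1+Real.sqrt (1-x^2)) - Real.log x) + 2*x/Real.sqrt (1-x^2))
      (2*(1 + C*(Real.log C - Real.log 2))/(Real.sqrt (1-C^2))^3) C := by
  set s := Real.sqrt (1 - C^2) with hsdef
  have h1C : 0 < 1 - C^2 := by nlinarith
  have hs0 : 0 < s := Real.sqrt_pos.2 h1C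
  have hs2 : s^2 = 1 - C^2 := Real.sq_sqrt h1C.le
  have h1 : HasDerivAt (fun x : ℝ => 1 - x^2) (-(2*C)) C := by
    simpa using ((hasDerivAt_pow 2 C).const_sub 1)
  have hds : HasDerivAt (fun x => Real.sqrt (1 - x^2)) (-C/s) C := by
    have h2 := (Real.hasDerivAt_sqrt h1C.ne').comp C h1
    refine h2.congr_deriv ?_
    rw [← hsdef]; field_simp
  have hlog : HasDerivAt Real.log C⁻¹ C := Real.hasDerivAt_log hC0.ne'
  have hlog1s : HasDerivAt (fun x => Real.log (1 + Real.sqrt (1 - x^2)))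
      ((1+s)⁻¹ * (-C/s)) C := by
    have := (Real.hasDerivAt_log (by positivity : (1:ℝ) + s ≠ 0)).comp C (hds.const_add 1)
    exact this
  have t1 : HasDerivAt (fun x => 2*(Real.log x - Real.log 2)/Real.sqrt (1-x^2))
      ((2*C⁻¹ * s - 2*(Real.log C - Real.log 2)*(-C/s))/s^2) C :=
    ((hlog.sub_const (Real.log 2)).const_mul 2).div hds hs0.ne'
  have t2 : HasDerivAt (fun x => 2*(Real.log (1+Real.sqrt (1-x^2)) - Real.log x))
      (2*((1+s)⁻¹ * (-C/s) - C⁻¹)) C := (hlog1s.sub hlog).const_mul 2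
  have t3 : HasDerivAt (fun x => 2*x/Real.sqrt (1-x^2))
      ((2*s - 2*C*(-C/s))/s^2) C := by
    have : HasDerivAt (fun x : ℝ => 2*x) 2 C := by simpa using (hasDerivAt_id C).const_mul 2
    exact this.div hds hs0.ne'
  have total := (t1.add t2).add t3
  refine total.congr_deriv ?_
  have h1s : (1:ℝ) + s ≠ 0 := by positivity
  field_simp
  linear_combination (-s^2 + C*s + C) * hs2

private lemma artanh_eq {C : ℝ} (hC0 : 0 < C) (hC1 : C < 1) :
    artanh (Real.sqrt (1 - C^2)) =
      Real.log (1 + Real.sqrt (1 - C^2)) - Real.log C := by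
  set s := Real.sqrt (1 - C^2) with hsdef
  have h1C : 0 < 1 - C^2 := by nlinarith
  have hs0 : 0 < s := Real.sqrt_pos.2 h1C
  have hs2 : s^2 = 1 - C^2 := Real.sq_sqrt h1C.le
  have hs1 : s < 1 := by nlinarith
  have h1s : (0:ℝ) < 1 + s := by linarith
  have hkey : (1+s)/(1-s) = ((1+s)/C)^2 := by
    rw [div_pow, div_eq_div_iff (by linarith) (by positivity)]
    linear_combination (1+s) * hs2
  rw [artanh, hkey, Real.log_pow, Real.log_div h1s.ne' hC0.ne']
  push_cast
  ring

theorem Gprime_properties (G' : ℝ → ℝ)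
    (hG' : ∀ C, G' C = 2 * (Real.log C - Real.log 2) / Real.sqrt (1 - C ^ 2) +
      2 * artanh (Real.sqrt (1 - C ^ 2)) + 2 * C / Real.sqrt (1 - C ^ 2)) :
    StrictMonoOn G' (Set.Ioo 0 1) ∧
    Tendsto G' (nhdsWithin 0 (Set.Ioi 0)) (nhds 0) ∧
    Tendsto G' (nhdsWithin 1 (Set.Iio 1)) atTop := by
  set f : ℝ → ℝ := fun x => 2*(Real.log x - Real.log 2)/Real.sqrt (1-x^2) +
      2*(Real.log (1+Real.sqrt (1-x^2)) - Real.log x) + 2*x/Real.sqrt (1-x^2) with hfdef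
  have key : ∀ C ∈ Set.Ioo (0:ℝ) 1, G' C = f C := by
    intro C hC
    rw [hG' C, artanh_eq hC.1 hC.2, hfdef]
  refine ⟨?_, ?_, ?_⟩
  · -- strict monotone
    have hmono : StrictMonoOn f (Set.Ioo 0 1) := by
      apply strictMonoOn_of_deriv_pos (convex_Ioo 0 1)
      · exact fun x hx => ((hasDeriv_f hx.1 hx.2).continuousAt).continuousWithinAt
      · intro x hx
        rw [interior_Ioo] at hx
        rw [(hasDeriv_f hx.1 hx.2).deriv]
        have h1C : 0 < 1 - x^2 := by nlinarith [hx.1, hx.2]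
        have hs0 : 0 < Real.sqrt (1 - x^2) := Real.sqrt_pos.2 h1C
        have := numer_pos hx.1 hx.2
        positivity
    intro a ha b hb hab
    rw [key a ha, key b hb]
    exact hmono ha hb hab
  · -- limit at 0⁺
    have hev : ∀ᶠ C in nhdsWithin (0:ℝ) (Set.Ioi 0), 0 < C ∧ C < 1 := by
      filter_upwards [self_mem_nhdsWithin,
        eventually_nhdsWithin_of_eventually_nhds (eventually_lt_nhds zero_lt_one)] with C h1 h2
      exact ⟨h1, h2⟩
    set F2 : ℝ → ℝ := fun C => Real.log C * C^2 *
        (2/(Real.sqrt (1-C^2)*(1+Real.sqrt (1-C^2)))) +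
        (2*Real.log (1+Real.sqrt (1-C^2)) - 2*Real.log 2/Real.sqrt (1-C^2) +
          2*C/Real.sqrt (1-C^2)) with hF2def
    have heq : ∀ᶠ C in nhdsWithin (0:ℝ) (Set.Ioi 0), G' C = F2 C := by
      filter_upwards [hev] with C hC
      rw [key C ⟨hC.1, hC.2⟩, hfdef, hF2def]
      set s := Real.sqrt (1 - C^2) with hsdef
      have h1C : 0 < 1 - C^2 := by nlinarith [hC.1, hC.2]
      have hs0 : 0 < s := Real.sqrt_pos.2 h1C
      have hs2 : s^2 = 1 - C^2 := Real.sq_sqrt h1C.le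
      have h1s : (0:ℝ) < 1 + s := by linarith
      field_simp
      linear_combination (-Real.log C) * hs2
    rw [tendsto_congr' heq]
    have hscont : ContinuousAt (fun C : ℝ => Real.sqrt (1-C^2)) 0 :=
      (Real.continuous_sqrt.comp (by continuity)).continuousAt
    have hsval : Real.sqrt (1-(0:ℝ)^2) = 1 := by norm_num
    have hA : Tendsto (fun C : ℝ => Real.log C * C^2) (nhdsWithin 0 (Set.Ioi 0)) (nhds 0) := by
      have := tendsto_log_mul_rpow_nhdsGT_zero (r := 2) two_pos
      apply this.congr'
      filter_upwards [self_mem_nhdsWithin] with x hx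
      rw [show ((2:ℝ) = ((2:ℕ):ℝ)) by norm_num, Real.rpow_natCast]
    have hB : Tendsto (fun C : ℝ => 2/(Real.sqrt (1-C^2)*(1+Real.sqrt (1-C^2))))
        (nhdsWithin 0 (Set.Ioi 0)) (nhds 1) := by
      have hc : ContinuousAt (fun C : ℝ => 2/(Real.sqrt (1-C^2)*(1+Real.sqrt (1-C^2)))) 0 := by
        apply ContinuousAt.div continuousAt_const
        · exact hscont.mul (continuousAt_const.add hscont)
        · simp [hsval]
      have := hc.tendsto.mono_left (nhdsWithin_le_nhds (s := Set.Ioi 0))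
      convert this using 2
      simp [hsval]
      norm_num
    have hC2 : Tendsto (fun C : ℝ => 2*Real.log (1+Real.sqrt (1-C^2)) -
        2*Real.log 2/Real.sqrt (1-C^2) + 2*C/Real.sqrt (1-C^2))
        (nhdsWithin 0 (Set.Ioi 0)) (nhds 0) := by
      have hc : ContinuousAt (fun C : ℝ => 2*Real.log (1+Real.sqrt (1-C^2)) -
          2*Real.log 2/Real.sqrt (1-C^2) + 2*C/Real.sqrt (1-C^2)) 0 := by
        have hlogc : ContinuousAt (fun C : ℝ => Real.log (1+Real.sqrt (1-C^2))) 0 := by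
          apply (Real.continuousAt_log ?_).comp (continuousAt_const.add hscont)
          simp [hsval]
        have hne : Real.sqrt (1-(0:ℝ)^2) ≠ 0 := by rw [hsval]; norm_num
        exact ((continuousAt_const.mul hlogc).sub
          (ContinuousAt.div continuousAt_const hscont hne)).add
          (ContinuousAt.div (continuousAt_const.mul continuousAt_id) hscont hne)
      have := hc.tendsto.mono_left (nhdsWithin_le_nhds (s := Set.Ioi 0))
      convert this using 2
      simp [hsval]
      norm_num
    have := (hA.mul hB).add hC2
    simpa using this
  · -- limit at 1⁻
    have heq : ∀ C, G' C = (2*(Real.log C - Real.log 2) + 2*C)/Real.sqrt (1-C^2) +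
        2*artanh (Real.sqrt (1-C^2)) := by
      intro C
      rw [hG' C]; ring
    rw [show G' = fun C => (2*(Real.log C - Real.log 2) + 2*C)/Real.sqrt (1-C^2) +
        2*artanh (Real.sqrt (1-C^2)) from funext heq]
    have hs0 : Tendsto (fun C : ℝ => Real.sqrt (1-C^2)) (nhdsWithin 1 (Set.Iio 1))
        (nhdsWithin 0 (Set.Ioi 0)) := by
      apply tendsto_nhdsWithin_of_tendsto_nhds_of_eventually_within
      · have hc : ContinuousAt (fun C : ℝ => Real.sqrt (1-C^2)) 1 :=
          (Real.continuous_sqrt.comp (by continuity)).continuousAt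
        have := hc.tendsto.mono_left (nhdsWithin_le_nhds (s := Set.Iio 1))
        convert this using 2
        norm_num
      · filter_upwards [self_mem_nhdsWithin,
          eventually_nhdsWithin_of_eventually_nhds (eventually_gt_nhds zero_lt_one)] with C h1 h2
        have : C < 1 := h1
        have : 0 < 1 - C^2 := by nlinarith
        exact Real.sqrt_pos.2 this
    have hnum : Tendsto (fun C : ℝ => 2*(Real.log C - Real.log 2) + 2*C)
        (nhdsWithin 1 (Set.Iio 1)) (nhds (2 - 2*Real.log 2)) := by
      have hc : ContinuousAt (fun C : ℝ => 2*(Real.log C - Real.log 2) + 2*C) 1 :=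
        (continuousAt_const.mul ((Real.continuousAt_log one_ne_zero).sub
          continuousAt_const)).add (continuousAt_const.mul continuousAt_id)
      have := hc.tendsto.mono_left (nhdsWithin_le_nhds (s := Set.Iio 1))
      convert this using 2
      simp [Real.log_one]
      ring
    have hpos : 0 < 2 - 2*Real.log 2 := by
      nlinarith [Real.log_two_lt_d9]
    have hmain : Tendsto (fun C : ℝ => (2*(Real.log C - Real.log 2) + 2*C)/Real.sqrt (1-C^2))
        (nhdsWithin 1 (Set.Iio 1)) atTop := by
      have := Filter.Tendsto.pos_mul_atTop hpos hnum hs0.inv_tendsto_nhdsGT_zero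
      simpa [div_eq_mul_inv] using this
    have hart : Tendsto (fun C : ℝ => 2*artanh (Real.sqrt (1-C^2)))
        (nhdsWithin 1 (Set.Iio 1)) (nhds 0) := by
      have hac : ContinuousAt artanh 0 := by
        have : ContinuousAt (fun x : ℝ => Real.log ((1+x)/(1-x))) 0 := by
          apply (Real.continuousAt_log ?_).comp
          · exact ContinuousAt.div (continuousAt_const.add continuousAt_id)
              (continuousAt_const.sub continuousAt_id) (by norm_num)
          · norm_num
        exact this.div continuousAt_const (by norm_num)
      have h2' := hac.tendsto.comp (hs0.mono_right (nhdsWithin_le_nhds (s := Set.Ioi 0)))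
      have h3 : artanh 0 = 0 := by simp [artanh]
      rw [h3] at h2'
      simpa [Function.comp] using h2'.const_mul 2
    have hge : ∀ᶠ C in nhdsWithin (1:ℝ) (Set.Iio 1),
        (-1:ℝ) ≤ 2*artanh (Real.sqrt (1-C^2)) := by
      filter_upwards [hart.eventually (eventually_gt_nhds (by norm_num : (-1:ℝ) < 0))] with C hC
      exact hC.le
    exact tendsto_atTop_add_right_of_le' _ (-1) hmain hge
end

section
/- Let 0 < C < 1. Then ∫_{−∞}^{−1/C} ∫_{−∞}^{0} (x² + y² − 1)^{−3/2} dy dx = artanh C. (This is the Study–de Sitter area of the quadrant Z̃^C = {(x,y) : x ≤ −1/C, y ≤ 0}, which lies outside the unit circle.) -/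
open MeasureTheory

open Set Filter Topology

lemma inner_int_s15 (b : ℝ) (hb : 0 < b) :
    (∫ y in Set.Iic (0:ℝ), (b + y ^ 2) ^ (-(3:ℝ)/2)) = 1 / b := by
  have h1 : (∫ y in Set.Iic (0:ℝ), (b + y ^ 2) ^ (-(3:ℝ)/2))
      = ∫ y in Set.Ioi (0:ℝ), (b + y ^ 2) ^ (-(3:ℝ)/2) := by
    have := integral_comp_neg_Iic (0:ℝ) (fun y => (b + y ^ 2) ^ (-(3:ℝ)/2))
    simp only [neg_zero, neg_pow, even_two.neg_pow] at this
    exact this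
  rw [h1]
  set g : ℝ → ℝ := fun y => y / (b * Real.sqrt (b + y ^ 2)) with hg
  have hderiv : ∀ y ∈ Set.Ici (0:ℝ), HasDerivAt g ((b + y ^ 2) ^ (-(3:ℝ)/2)) y := by
    intro y _
    have hpos : 0 < b + y ^ 2 := by positivity
    set s := Real.sqrt (b + y ^ 2) with hsdef
    have hsp : 0 < s := Real.sqrt_pos.2 hpos
    have hs2 : s ^ 2 = b + y ^ 2 := Real.sq_sqrt hpos.le
    have hs : HasDerivAt (fun y : ℝ => Real.sqrt (b + y ^ 2)) (y / s) y := by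
      have h2 : HasDerivAt (fun y : ℝ => b + y ^ 2) (2 * y) y := by
        simpa using ((hasDerivAt_pow 2 y).const_add b)
      have := (Real.hasDerivAt_sqrt hpos.ne').comp y h2
      convert this using 1
      iterate 3 rfl
      field_simp
      ring
    have hd : HasDerivAt g
        ((1 * (b * s) - y * (b * (y / s))) / (b * s) ^ 2) y :=
      (hasDerivAt_id y).div (hs.const_mul b) (by positivity)
    convert hd using 1
    have e1 : (1 * (b * s) - y * (b * (y / s))) / (b * s) ^ 2
        = 1 / (s * (b + y ^ 2)) := by
      rw [← hs2]
      field_simp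
      linear_combination hs2
    rw [e1, one_div, show -(3:ℝ)/2 = -(3/2) by ring, Real.rpow_neg hpos.le,
      show (3:ℝ)/2 = 1 + 1/2 by ring, Real.rpow_add hpos, Real.rpow_one,
      ← Real.sqrt_eq_rpow, ← hsdef, mul_comm]
  have hnonneg : ∀ y ∈ Set.Ioi (0:ℝ), 0 ≤ (b + y ^ 2) ^ (-(3:ℝ)/2) := by
    intro y _
    exact Real.rpow_nonneg (by positivity) _
  have htend : Tendsto g atTop (𝓝 (1 / b)) := by
    have key : ∀ᶠ y in atTop, (b * Real.sqrt (b / y ^ 2 + 1))⁻¹ = g y := by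
      filter_upwards [eventually_gt_atTop (0:ℝ)] with y hy
      have hsq : Real.sqrt (b + y ^ 2) = y * Real.sqrt (b / y ^ 2 + 1) := by
        rw [← Real.sqrt_sq hy.le, ← Real.sqrt_mul (by positivity)]
        congr 1
        field_simp
        exact Real.sq_sqrt (by positivity)
      rw [hg]
      simp only [hsq]
      rw [show b * (y * Real.sqrt (b / y ^ 2 + 1)) = y * (b * Real.sqrt (b / y ^ 2 + 1)) by ring,
        ← div_div, div_self hy.ne', one_div]
    have h2 : Tendsto (fun y : ℝ => b / y ^ 2 + 1) atTop (𝓝 (0 + 1)) := by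
      apply Tendsto.add_const
      have hp : Tendsto (fun y : ℝ => y ^ 2) atTop atTop :=
        tendsto_pow_atTop (by norm_num)
      exact hp.const_div_atTop b
    rw [zero_add] at h2
    have h3 : Tendsto (fun y : ℝ => b * Real.sqrt (b / y ^ 2 + 1)) atTop (𝓝 b) := by
      have := ((Real.continuous_sqrt.tendsto 1).comp h2).const_mul b
      simpa using this
    have h4 : Tendsto (fun y : ℝ => (b * Real.sqrt (b / y ^ 2 + 1))⁻¹) atTop (𝓝 b⁻¹) :=
      h3.inv₀ hb.ne'
    rw [one_div]
    exact h4.congr' key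
  have := integral_Ioi_of_hasDerivAt_of_nonneg'
    (fun y hy => hderiv y hy) hnonneg htend
  rw [this, hg]
  simp

theorem sds_area_quadrant (C : ℝ) (hC0 : 0 < C) (hC1 : C < 1) :
    (∫ x in Set.Iic (-(1 / C)), ∫ y in Set.Iic (0:ℝ),
        (x ^ 2 + y ^ 2 - 1) ^ (-(3:ℝ)/2)) = artanh C := by
  have hCinv : 1 < 1 / C := by
    rw [lt_div_iff₀ hC0]; linarith
  have hstep : (∫ x in Set.Iic (-(1/C)), ∫ y in Set.Iic (0:ℝ),
      (x ^ 2 + y ^ 2 - 1) ^ (-(3:ℝ)/2))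
      = ∫ x in Set.Iic (-(1/C)), (x ^ 2 - 1)⁻¹ := by
    apply setIntegral_congr_fun measurableSet_Iic
    intro x hx
    have hx1 : x ≤ -(1/C) := hx
    have hb : 0 < x ^ 2 - 1 := by nlinarith
    have := inner_int_s15 (x ^ 2 - 1) hb
    simp only [show ∀ y : ℝ, x ^ 2 + y ^ 2 - 1 = (x ^ 2 - 1) + y ^ 2 from fun y => by ring]
    rw [this, one_div]
  rw [hstep]
  have h2 : (∫ x in Set.Iic (-(1/C)), (x ^ 2 - 1)⁻¹)
      = ∫ x in Set.Ioi (1/C), (x ^ 2 - 1)⁻¹ := by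
    have := integral_comp_neg_Iic (-(1/C)) (fun x => (x ^ 2 - 1)⁻¹)
    simp only [even_two.neg_pow, neg_neg] at this
    exact this
  rw [h2]
  set g : ℝ → ℝ := fun x => (Real.log (x - 1) - Real.log (x + 1)) / 2 with hg
  have hderiv : ∀ x ∈ Set.Ici (1/C), HasDerivAt g ((x ^ 2 - 1)⁻¹) x := by
    intro x hx
    have hx1 : 1 < x := lt_of_lt_of_le hCinv hx
    have hm : (0:ℝ) < x - 1 := by linarith
    have hp : (0:ℝ) < x + 1 := by linarith
    have d1 : HasDerivAt (fun x : ℝ => Real.log (x - 1)) ((x - 1)⁻¹) x := by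
      have := (Real.hasDerivAt_log hm.ne').comp x ((hasDerivAt_id x).sub_const 1)
      simpa [Function.comp_def] using this
    have d2 : HasDerivAt (fun x : ℝ => Real.log (x + 1)) ((x + 1)⁻¹) x := by
      have := (Real.hasDerivAt_log hp.ne').comp x ((hasDerivAt_id x).add_const 1)
      simpa [Function.comp_def] using this
    have := (d1.sub d2).div_const 2
    convert this using 1
    have hne : x ^ 2 - 1 ≠ 0 := by nlinarith
    iterate 3 rfl
    rw [show x ^ 2 - 1 = (x - 1) * (x + 1) by ring]
    field_simp
    ring
  have hnonneg : ∀ x ∈ Set.Ioi (1/C), 0 ≤ (x ^ 2 - 1)⁻¹ := by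
    intro x hx
    have hx1 : 1 < x := lt_trans hCinv hx
    have : (0:ℝ) < x ^ 2 - 1 := by nlinarith
    positivity
  have hq : Tendsto (fun x : ℝ => (x - 1) / (x + 1)) atTop (𝓝 1) := by
    have h0 : Tendsto (fun x : ℝ => x + 1) atTop atTop :=
      tendsto_atTop_add_const_right _ 1 tendsto_id
    have h1 : Tendsto (fun x : ℝ => 2 / (x + 1)) atTop (𝓝 0) := h0.const_div_atTop 2
    have h2' := (tendsto_const_nhds (α := ℝ) (x := (1:ℝ)) (f := atTop)).sub h1
    rw [sub_zero] at h2'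
    apply h2'.congr'
    filter_upwards [eventually_gt_atTop (0:ℝ)] with x hx
    have : x + 1 ≠ 0 := by linarith
    field_simp
    ring
  have htend : Tendsto g atTop (𝓝 0) := by
    have hlog : Tendsto (fun x : ℝ => Real.log ((x - 1) / (x + 1))) atTop (𝓝 0) := by
      have := (Real.continuousAt_log one_ne_zero).tendsto.comp hq
      simpa [Function.comp_def] using this
    have h3 := hlog.div_const 2
    rw [zero_div] at h3
    apply h3.congr'
    filter_upwards [eventually_gt_atTop (1:ℝ)] with x hx
    rw [hg]
    simp only
    rw [Real.log_div (by linarith : x - 1 ≠ 0) (by linarith : x + 1 ≠ 0)]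
  have key := integral_Ioi_of_hasDerivAt_of_nonneg' hderiv hnonneg htend
  rw [key, hg]
  simp only
  have hm : (0:ℝ) < 1/C - 1 := by linarith
  have hp : (0:ℝ) < 1/C + 1 := by linarith
  rw [artanh, show (1 + C) / (1 - C) = (1/C + 1) / (1/C - 1) by
    field_simp]
  rw [Real.log_div hp.ne' hm.ne']
  ring
end

section
/- Let 0 < C < 1 and η < 1. Then ∫_{−∞}^{η} ∫_{−∞}^{−(1/C)√(2(1−y))} (x² + y² − 1)^{−3/2} dx dy = (1/√(1−C²))·artanh( √(1−C²) / √(1 − C²(1+η)/2) ) − artanh( (2 − C² + 2√(1 − C²(1+η)/2)) / (2 − C²η + 2√(1 − C²(1+η)/2)) ). (This is the Study–de Sitter area of the region Ẽ^C_η = {(x,y) : C²x² + 2y − 2 ≤ 0, y ≤ η, x ≤ 0}, which lies outside the unit circle.) -/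
open MeasureTheory

namespace SdSAreaAux

open Set Filter Topology

noncomputable def sf (C y : ℝ) : ℝ := Real.sqrt (1 - C ^ 2 * (1 + y) / 2)
noncomputable def gf (C y : ℝ) : ℝ := C ^ 2 / (2 * sf C y * (sf C y + 1) * (1 - y))
noncomputable def Gf (C y : ℝ) : ℝ :=
  (1/(2*Real.sqrt (1-C^2))) *
      (Real.log (sf C y + Real.sqrt (1-C^2)) - Real.log (sf C y - Real.sqrt (1-C^2)))
    - Real.log (1 + sf C y) - Real.log 2 / 2 + Real.log (C^2) / 2 + Real.log (1 - y) / 2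

lemma rpow_neg_three_div_two {q : ℝ} (hq : 0 < q) :
    q ^ (-(3:ℝ)/2) = 1 / (q * Real.sqrt q) := by
  have h1 : q ^ ((3:ℝ)/2) = q * Real.sqrt q := by
    rw [show (3:ℝ)/2 = 1 + 1/2 by norm_num, Real.rpow_add hq, Real.rpow_one,
      Real.sqrt_eq_rpow]
  rw [show (-(3:ℝ)/2) = -((3:ℝ)/2) by norm_num, Real.rpow_neg hq.le, h1, one_div]

lemma arg_pos' {C y : ℝ} (hC0 : 0 < C) (hC1 : C < 1) (hy : y < 1) :
    0 < 1 - C ^ 2 * (1 + y) / 2 := by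
  rcases le_or_gt (1+y) 0 with h | h
  · nlinarith [sq_nonneg C]
  · nlinarith [sq_nonneg C]

lemma tendsto_sqrt_atTop : Tendsto Real.sqrt atTop atTop := by
  apply tendsto_atTop_atTop.2
  intro b
  refine ⟨max 0 (b^2), fun x hx => ?_⟩
  calc b ≤ |b| := le_abs_self b
    _ = Real.sqrt (b^2) := (Real.sqrt_sq_eq_abs b).symm
    _ ≤ Real.sqrt x := Real.sqrt_le_sqrt (le_trans (le_max_right _ _) hx)

/-- the inner integral -/
lemma inner_eq {C y : ℝ} (hC0 : 0 < C) (hC1 : C < 1) (hy : y < 1) (hy1 : y ≠ -1) :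
    (∫ x in Set.Iic (-(1 / C) * Real.sqrt (2 * (1 - y))),
        (x ^ 2 + y ^ 2 - 1) ^ (-(3:ℝ)/2)) = gf C y := by
  have hC := hC0.ne'
  rw [show gf C y
      = C^2 / (2 * Real.sqrt (1 - C^2*(1+y)/2) * (Real.sqrt (1 - C^2*(1+y)/2) + 1) * (1 - y))
    from rfl]
  set s := Real.sqrt (1 - C^2*(1+y)/2) with hs_def
  have hs0 : 0 < s := Real.sqrt_pos.2 (arg_pos' hC0 hC1 hy)
  have hs2 : s^2 = 1 - C^2*(1+y)/2 := Real.sq_sqrt (arg_pos' hC0 hC1 hy).le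
  set a := (1 / C) * Real.sqrt (2 * (1 - y)) with ha_def
  have ha : 0 < a := by
    apply mul_pos (by positivity)
    exact Real.sqrt_pos.2 (by linarith)
  have ha2 : a^2 = 2*(1-y)/C^2 := by
    rw [ha_def, mul_pow, Real.sq_sqrt (by linarith : (0:ℝ) ≤ 2*(1-y))]
    field_simp
  have hrw : -(1 / C) * Real.sqrt (2 * (1 - y)) = -a := by rw [ha_def]; ring
  clear_value s a
  rw [hrw]
  have hc : y^2 - 1 ≠ 0 := by
    intro h
    have h2 : (y-1)*(y+1) = 0 := by linear_combination h
    rcases mul_eq_zero.1 h2 with h' | h'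
    · linarith
    · exact hy1 (by linarith)
  have hqpos : ∀ x : ℝ, x ∈ Ici a → 0 < x^2 + y^2 - 1 := by
    intro x hx
    have hx' : a ≤ x := hx
    have h1 : a^2 ≤ x^2 := by nlinarith
    have h2 : 0 < a^2 + y^2 - 1 := by
      rw [ha2]
      have : 2*(1-y) < 2*(1-y)/C^2 := by
        rw [lt_div_iff₀ (by positivity)]
        nlinarith [mul_pos (by nlinarith : (0:ℝ) < 1 - C^2) (by linarith : (0:ℝ) < 1 - y)]
      nlinarith [sq_nonneg (1-y)]
    linarith
  have hneg : (∫ x in Set.Iic (-a), (x ^ 2 + y ^ 2 - 1) ^ (-(3:ℝ)/2))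
      = ∫ x in Set.Ioi a, (x ^ 2 + y ^ 2 - 1) ^ (-(3:ℝ)/2) := by
    rw [← integral_comp_neg_Ioi]
    congr 1
    funext x
    rw [neg_sq]
  rw [hneg]
  set g : ℝ → ℝ := fun x => x / ((y^2-1) * Real.sqrt (x^2 + y^2 - 1)) with hg_def
  have hderiv : ∀ x ∈ Ici a, HasDerivAt g ((x ^ 2 + y ^ 2 - 1) ^ (-(3:ℝ)/2)) x := by
    intro x hx
    have hq : 0 < x^2 + y^2 - 1 := hqpos x hx
    have h1 : HasDerivAt (fun x : ℝ => x^2 + y^2 - 1) (2*x) x := by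
      simpa using ((hasDerivAt_pow 2 x).add_const (y^2)).sub_const 1
    have h2 : HasDerivAt (fun x : ℝ => Real.sqrt (x^2 + y^2 - 1))
        ((2*x) / (2 * Real.sqrt (x^2 + y^2 - 1))) x := h1.sqrt hq.ne'
    have h3 : HasDerivAt (fun x : ℝ => (y^2-1) * Real.sqrt (x^2 + y^2 - 1))
        ((y^2-1) * ((2*x) / (2 * Real.sqrt (x^2 + y^2 - 1)))) x := h2.const_mul _
    set r := Real.sqrt (x^2 + y^2 - 1) with hr_def
    have hr0 : 0 < r := Real.sqrt_pos.2 hq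
    have hsqs : r ^ 2 = x^2 + y^2 - 1 := Real.sq_sqrt hq.le
    have h4 := (hasDerivAt_id x).div h3 (mul_ne_zero hc hr0.ne')
    clear_value r
    refine h4.congr_deriv ?_
    symm
    rw [show Real.sqrt (x^2+y^2-1) = r from hr_def.symm]
    have h5 : (1:ℝ) * ((y^2-1)*r) - id x*((y^2-1)*(2*x/(2*r))) = (y^2-1)^2 / r := by
      simp only [id]
      field_simp
      linear_combination hsqs
    rw [eq_div_iff (by positivity : ((y^2-1)*r)^2 ≠ 0), h5,
      show x^2+y^2-1 = r^2 from hsqs.symm,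
      rpow_neg_three_div_two (by positivity : (0:ℝ) < r^2), Real.sqrt_sq hr0.le]
    field_simp
  have hnonneg : ∀ x ∈ Ioi a, 0 ≤ (x ^ 2 + y ^ 2 - 1) ^ (-(3:ℝ)/2) := by
    intro x hx
    exact Real.rpow_nonneg (by have := hqpos x (Set.mem_Ici.2 (le_of_lt hx)); linarith) _
  have htend : Tendsto g atTop (𝓝 (1/(y^2-1))) := by
    have hbase : Tendsto (fun x : ℝ => x^2/(x^2 + y^2 - 1)) atTop (𝓝 1) := by
      have h1 : Tendsto (fun x : ℝ => x^2 + y^2 - 1) atTop atTop := by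
        simp only [sub_eq_add_neg]
        exact tendsto_atTop_add_const_right _ _
          (tendsto_atTop_add_const_right _ _ (tendsto_pow_atTop two_ne_zero))
      have h2 : Tendsto (fun x : ℝ => (y^2-1)/(x^2 + y^2 - 1)) atTop (𝓝 0) :=
        tendsto_const_nhds.div_atTop h1
      have hev2 : ∀ᶠ x : ℝ in atTop, 1 - (y^2-1)/(x^2 + y^2 - 1) = x^2/(x^2 + y^2 - 1) := by
        filter_upwards [eventually_ge_atTop a] with x hx
        have hq : 0 < x^2 + y^2 - 1 := hqpos x hx
        field_simp
        ring
      apply Tendsto.congr' hev2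
      simpa using tendsto_const_nhds.sub h2
    have hev : ∀ᶠ x in atTop, (1/(y^2-1)) * Real.sqrt (x^2/(x^2 + y^2 - 1)) = g x := by
      filter_upwards [eventually_ge_atTop a, eventually_ge_atTop (0:ℝ)] with x hx hx0
      have hq : 0 < x^2 + y^2 - 1 := hqpos x hx
      rw [hg_def]
      simp only
      rw [Real.sqrt_div (sq_nonneg x), Real.sqrt_sq hx0]
      rw [div_mul_div_comm, one_mul]
    apply Tendsto.congr' hev
    have := ((Real.continuous_sqrt.tendsto 1).comp hbase).const_mul (1/(y^2-1))
    simpa using this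
  rw [integral_Ioi_of_hasDerivAt_of_nonneg' hderiv hnonneg htend]
  have hsa : Real.sqrt (a^2 + y^2 - 1) = s * a := by
    have h1 : a^2 + y^2 - 1 = (s*a)^2 := by
      rw [show (s*a)^2 = s^2*a^2 by ring, hs2, ha2]
      field_simp
      ring
    rw [h1, Real.sqrt_sq (by positivity)]
  rw [hg_def]
  simp only
  rw [hsa]
  have hs1 : s + 1 ≠ 0 := by positivity
  have h1y : (1:ℝ) - y ≠ 0 := by linarith
  field_simp
  linear_combination (2*(1-y)) * hs2

lemma k_lt_s {C y : ℝ} (hC0 : 0 < C) (hC1 : C < 1) (hy : y < 1) :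
    Real.sqrt (1-C^2) < sf C y := by
  apply Real.sqrt_lt_sqrt (by nlinarith)
  nlinarith [mul_pos hC0 hC0]

lemma sf_hasDeriv {C y : ℝ} (hC0 : 0 < C) (hC1 : C < 1) (hy : y < 1) :
    HasDerivAt (fun y => sf C y) (-C^2/(4 * sf C y)) y := by
  have h0 : HasDerivAt (fun y : ℝ => 1 - C^2*(1+y)/2) (-(C^2/2)) y := by
    have h := ((((hasDerivAt_id y).const_add (1:ℝ)).const_mul (C^2)).div_const 2).const_sub 1
    refine h.congr_deriv ?_
    ring
  have h2 := h0.sqrt (ne_of_gt (arg_pos' hC0 hC1 hy))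
  refine h2.congr_deriv ?_
  unfold sf
  ring

lemma Gf_hasDeriv {C y : ℝ} (hC0 : 0 < C) (hC1 : C < 1) (hy : y < 1) :
    HasDerivAt (fun y => Gf C y) (gf C y) y := by
  set k := Real.sqrt (1-C^2) with hk_def
  set s := sf C y with hs_def
  have hC2 : (0:ℝ) < 1 - C^2 := by nlinarith
  have hk0 : 0 < k := Real.sqrt_pos.2 hC2
  have hk2 : k^2 = 1 - C^2 := Real.sq_sqrt hC2.le
  have hs0 : 0 < s := Real.sqrt_pos.2 (arg_pos' hC0 hC1 hy)
  have hs2 : s^2 = 1 - C^2*(1+y)/2 := Real.sq_sqrt (arg_pos' hC0 hC1 hy).le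
  have hks : k < s := k_lt_s hC0 hC1 hy
  have hds : HasDerivAt (fun y => sf C y) (-C^2/(4*s)) y := sf_hasDeriv hC0 hC1 hy
  have hl1 : HasDerivAt (fun y => Real.log (sf C y + k)) ((-C^2/(4*s))/(s + k)) y :=
    (hds.add_const k).log (by positivity)
  have hl2 : HasDerivAt (fun y => Real.log (sf C y - k)) ((-C^2/(4*s))/(s - k)) y :=
    (hds.sub_const k).log (sub_pos.2 hks).ne'
  have ht1 := (hl1.sub hl2).const_mul (1/(2*k))
  have ht2 : HasDerivAt (fun y => Real.log (1 + sf C y)) ((-C^2/(4*s))/(1 + s)) y :=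
    (hds.const_add 1).log (by positivity)
  have h1y : HasDerivAt (fun y : ℝ => 1 - y) (-1) y := by
    simpa using (hasDerivAt_id y).const_sub 1
  have ht3 : HasDerivAt (fun y : ℝ => Real.log (1 - y) / 2) ((-1)/(1-y)/2) y :=
    (h1y.log (by intro h; rw [sub_eq_zero] at h; exact absurd h.symm hy.ne)).div_const 2
  have hcomb := (((ht1.sub ht2).sub_const (Real.log 2 / 2)).add_const
    (Real.log (C^2) / 2)).add ht3
  have hfun : (fun y => Gf C y) = fun y =>
      ((1/(2*k) * (Real.log (sf C y + k) - Real.log (sf C y - k))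
        - Real.log (1 + sf C y) - Real.log 2 / 2) + Real.log (C^2) / 2)
        + Real.log (1 - y) / 2 := by
    funext z
    simp only [Gf, hk_def]
  rw [hfun]
  refine hcomb.congr_deriv ?_
  symm
  simp only [gf, ← hs_def]
  have hy1 : (1:ℝ) - y ≠ 0 := by intro h; rw [sub_eq_zero] at h; exact absurd h.symm hy.ne
  have hsk : s - k ≠ 0 := (sub_pos.2 hks).ne'
  have hsk' : s + k ≠ 0 := by positivity
  have h1s : 1 + s ≠ 0 := by positivity
  field_simp
  linear_combination ((512:ℝ)*k + (-512:ℝ)*k^3 + (512:ℝ)*s*k + (-512:ℝ)*s*k^3 + (512:ℝ)*s^2*k + (-512:ℝ)*s^2*k^3 + (512:ℝ)*s^3*k + (-512:ℝ)*s^3*k^3 + (512:ℝ)*s^4*k + (-256:ℝ)*s^4*k^3 + (512:ℝ)*s^5*k + (256:ℝ)*s^6*k + (-512:ℝ)*y*k + (512:ℝ)*y*k^3 + (-512:ℝ)*y*s*k + (512:ℝ)*y*s*k^3 + (-512:ℝ)*y*s^2*k + (512:ℝ)*y*s^2*k^3 + (-512:ℝ)*y*s^3*k + (512:ℝ)*y*s^3*k^3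 + (-512:ℝ)*y*s^4*k + (256:ℝ)*y*s^4*k^3 + (-512:ℝ)*y*s^5*k + (-256:ℝ)*y*s^6*k + (-768:ℝ)*C^2*k + (256:ℝ)*C^2*k^3 + (-640:ℝ)*C^2*s*k + (128:ℝ)*C^2*s*k^3 + (-512:ℝ)*C^2*s^2*k + (-256:ℝ)*C^2*s^3*k + (512:ℝ)*C^2*y*k + (512:ℝ)*C^2*y*s*k + (512:ℝ)*C^2*y*s^2*k + (256:ℝ)*C^2*y*s^3*k + (256:ℝ)*C^2*y^2*k + (-256:ℝ)*C^2*y^2*k^3 + (128:ℝ)*C^2*y^2*s*k + (-128:ℝ)*C^2*y^2*s*k^3 + (256:ℝ)*C^4*k + (128:ℝ)*C^4*s*k + (-256:ℝ)*C^4*y^2*k + (-128:ℝ)*C^4*y^2*s*k) * hs2 + ((-512:ℝ)*k + (-512:ℝ)*s*k + (512:ℝ)*y*k + (512:ℝ)*y*s*k + (512:ℝ)*C^2*k + (384:ℝ)*C^2*s*k + (-512:ℝ)*C^2*y^2*k + (-384:ℝ)*C^2*y^2*s*k + (-128:ℝ)*C^4*k + (-64:ℝ)*C^4*s*k + (-128:ℝ)*C^4*y*k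 + (-64:ℝ)*C^4*y*s*k + (128:ℝ)*C^4*y^2*k + (64:ℝ)*C^4*y^2*s*k + (128:ℝ)*C^4*y^3*k + (64:ℝ)*C^4*y^3*s*k) * hk2 + ((-512:ℝ)*C^2*k*y + (640:ℝ)*C^2*k*s + (-512:ℝ)*C^2*k*s*y + (-128:ℝ)*C^2*k*s*y^2 + (512:ℝ)*C^2*k*s^2 + (-512:ℝ)*C^2*k*s^2*y + (-256:ℝ)*C^2*k*s^3*y + (-128:ℝ)*C^2*k^3*s + (128:ℝ)*C^2*k^3*s*y^2 + (-504:ℝ)*k*s + (-504:ℝ)*k*s^2 + (-508:ℝ)*k*s^3 + (-512:ℝ)*k*s^4 + (512:ℝ)*k*s^4*y + (-512:ℝ)*k*s^5 + (512:ℝ)*k*s^5*y + (-256:ℝ)*k*s^6 + (256:ℝ)*k*s^6*y + (504:ℝ)*k^3 + (508:ℝ)*k^3*s + (512:ℝ)*k^3*s^2 + (-512:ℝ)*k^3*s^2*y + (512:ℝ)*k^3*s^3 + (-512:ℝ)*k^3*s^3*y + (256:ℝ)*k^3*s^4 + (-256:ℝ)*k^3*s^4*y + (764:ℝ)*C^2*k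 + (-256:ℝ)*C^4*k + (256:ℝ)*C^4*k*y^2 + (-256:ℝ)*C^2*k*y^2 + (-504:ℝ)*k + (512:ℝ)*k*s^2*y + (256:ℝ)*C^2*k*s^3 + (512:ℝ)*k*s^3*y + (-512:ℝ)*k^3*y + (-512:ℝ)*k^3*s*y + (512:ℝ)*k*y + (-128:ℝ)*C^4*k*s + (512:ℝ)*k*s*y + (128:ℝ)*C^4*k*s*y^2 + (-256:ℝ)*C^2*k^3 + (256:ℝ)*C^2*k^3*y^2) * hs2 + ((-510:ℝ)*C^2*k + (-384:ℝ)*C^2*k*s + (2:ℝ)*C^2*k*y + (504:ℝ)*k*s + (64:ℝ)*C^4*k*s + (64:ℝ)*C^4*k*s*y + (384:ℝ)*C^2*k*s*y^2 + (-64:ℝ)*C^4*k*s*y^2 + (-64:ℝ)*C^4*k*s*y^3 + (504:ℝ)*k + (128:ℝ)*C^4*k + (128:ℝ)*C^4*k*y + (-128:ℝ)*C^4*k*y^2 + (-128:ℝ)*C^4*k*y^3 + (-512:ℝ)*k*y + (512:ℝ)*C^2*k*y^2 + (-512:ℝ)*k*s*y) * hk2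

lemma sf_tendsto_atTop {C : ℝ} (hC0 : 0 < C) : Tendsto (fun y => sf C y) atBot atTop := by
  have h1 : Tendsto (fun y : ℝ => 1 - C^2*(1+y)/2) atBot atTop := by
    have h2 : Tendsto (fun y : ℝ => (C^2/2) * (-y)) atBot atTop :=
      (tendsto_neg_atBot_atTop).const_mul_atTop (by positivity)
    have h3 := tendsto_atTop_add_const_right atBot (1 - C^2/2) h2
    apply h3.congr
    intro y; ring
  exact tendsto_sqrt_atTop.comp h1

lemma log_ratio_tendsto {k : ℝ} (hk : 0 < k) :
    Tendsto (fun t => (1/(2*k)) * (Real.log (t+k) - Real.log (t-k))) atTop (𝓝 0) := by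
  have hq : Tendsto (fun t : ℝ => 1 + 2*k/(t-k)) atTop (𝓝 1) := by
    have h1 : Tendsto (fun t : ℝ => t - k) atTop atTop := by
      simpa [sub_eq_add_neg] using tendsto_atTop_add_const_right atTop (-k) tendsto_id
    have h2 : Tendsto (fun t : ℝ => 2*k/(t-k)) atTop (𝓝 0) := tendsto_const_nhds.div_atTop h1
    simpa using tendsto_const_nhds.add h2
  have hlog : Tendsto (fun t : ℝ => Real.log (1 + 2*k/(t-k))) atTop (𝓝 0) := by
    have := (Real.continuousAt_log one_ne_zero).tendsto.comp hq
    simpa [Function.comp_def] using this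
  have hev : ∀ᶠ t : ℝ in atTop,
      (1/(2*k)) * Real.log (1 + 2*k/(t-k)) = (1/(2*k)) * (Real.log (t+k) - Real.log (t-k)) := by
    filter_upwards [eventually_gt_atTop k] with t ht
    have h1 : (0:ℝ) < t - k := by linarith
    have h2 : (0:ℝ) < t + k := by linarith
    rw [show (1 : ℝ) + 2*k/(t-k) = (t+k)/(t-k) by field_simp; ring,
      Real.log_div h2.ne' h1.ne']
  have h3 := hlog.const_mul (1/(2*k))
  rw [mul_zero] at h3
  exact Tendsto.congr' hev h3

lemma Gf_tendsto {C : ℝ} (hC0 : 0 < C) (hC1 : C < 1) :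
    Tendsto (fun y => Gf C y) atBot (𝓝 0) := by
  set k := Real.sqrt (1-C^2) with hk_def
  have hC2 : (0:ℝ) < 1 - C^2 := by nlinarith
  have hk0 : 0 < k := Real.sqrt_pos.2 hC2
  have hT1 : Tendsto (fun y => (1/(2*k)) * (Real.log (sf C y + k) - Real.log (sf C y - k)))
      atBot (𝓝 0) := (log_ratio_tendsto hk0).comp (sf_tendsto_atTop hC0)
  have h1my : Tendsto (fun y : ℝ => 1 - y) atBot atTop := by
    have := tendsto_atTop_add_const_right atBot (1:ℝ) tendsto_neg_atBot_atTop
    apply this.congr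
    intro y; ring
  have hsq1my : Tendsto (fun y : ℝ => Real.sqrt (1 - y)) atBot atTop :=
    tendsto_sqrt_atTop.comp h1my
  have h01 : Tendsto (fun y : ℝ => 1/Real.sqrt (1-y)) atBot (𝓝 0) := by
    simpa [one_div, Pi.inv_def] using hsq1my.inv_tendsto_atTop
  have hratio : Tendsto (fun y : ℝ => (1 - C^2*(1+y)/2)/(1-y)) atBot (𝓝 (C^2/2)) := by
    have h2 : Tendsto (fun y : ℝ => (1-C^2)/(1-y)) atBot (𝓝 0) :=
      tendsto_const_nhds.div_atTop h1my
    have h3 := (tendsto_const_nhds (x := C^2/2) (f := atBot)).add h2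
    rw [add_zero] at h3
    apply Tendsto.congr' ?_ h3
    filter_upwards [eventually_lt_atBot (1:ℝ)] with y hy
    have h1y : (1:ℝ) - y ≠ 0 := by intro h; nlinarith [sub_eq_zero.1 h]
    field_simp
    ring
  have h02 : Tendsto (fun y : ℝ => sf C y / Real.sqrt (1-y)) atBot
      (𝓝 (Real.sqrt (C^2/2))) := by
    have hsqrt := (Real.continuous_sqrt.tendsto (C^2/2)).comp hratio
    apply Tendsto.congr' ?_ hsqrt
    filter_upwards [eventually_lt_atBot (1:ℝ)] with y hy
    simp only [Function.comp]
    rw [Real.sqrt_div (arg_pos' hC0 hC1 hy).le]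
    rfl
  have hw : Tendsto (fun y : ℝ => (1 + sf C y)/Real.sqrt (1-y)) atBot
      (𝓝 (Real.sqrt (C^2/2))) := by
    have h := h01.add h02
    rw [zero_add] at h
    apply h.congr
    intro y
    rw [← add_div]
  have hr : Tendsto (fun y : ℝ => 2*(1 + sf C y)^2/(C^2*(1-y))) atBot (𝓝 1) := by
    have h2 := (hw.pow 2).const_mul (2/C^2)
    have hval : (2/C^2) * (Real.sqrt (C^2/2))^2 = 1 := by
      rw [Real.sq_sqrt (by positivity)]
      field_simp
    rw [hval] at h2
    apply Tendsto.congr' ?_ h2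
    filter_upwards [eventually_lt_atBot (1:ℝ)] with y hy
    have h1y : (0:ℝ) < 1 - y := by linarith
    rw [div_pow, Real.sq_sqrt h1y.le]
    field_simp
  have hR : Tendsto (fun y : ℝ => -(1/2) * Real.log (2*(1 + sf C y)^2/(C^2*(1-y))))
      atBot (𝓝 0) := by
    have := (Real.continuousAt_log one_ne_zero).tendsto.comp hr
    simpa using this.const_mul (-(1/2):ℝ)
  have hsum := hT1.add hR
  apply Tendsto.congr' ?_ (by simpa using hsum)
  filter_upwards [eventually_lt_atBot (1:ℝ)] with y hy
  have h1y : (0:ℝ) < 1 - y := by linarith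
  have hs0 : 0 < sf C y := Real.sqrt_pos.2 (arg_pos' hC0 hC1 hy)
  have hsplit : Real.log (2*(1 + sf C y)^2/(C^2*(1-y)))
      = Real.log 2 + 2 * Real.log (1 + sf C y) - Real.log (C^2) - Real.log (1-y) := by
    rw [Real.log_div (by positivity) (by positivity),
      Real.log_mul (two_ne_zero) (by positivity),
      Real.log_mul (by positivity) (by positivity), Real.log_pow]
    push_cast
    ring
  simp only [Gf, hsplit, ← hk_def]
  ring

lemma gf_pos {C y : ℝ} (hC0 : 0 < C) (hC1 : C < 1) (hy : y < 1) : 0 < gf C y := by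
  have hs0 : 0 < sf C y := Real.sqrt_pos.2 (arg_pos' hC0 hC1 hy)
  have h1y : (0:ℝ) < 1 - y := by linarith
  unfold gf
  positivity

lemma outer_int {C η : ℝ} (hC0 : 0 < C) (hC1 : C < 1) (hη : η < 1) :
    ∫ y in Iic η, gf C y = Gf C η := by
  have hneg : (∫ y in Iic η, gf C y) = ∫ y in Ioi (-η), gf C (-y) := by
    have := integral_comp_neg_Ioi (-η) (gf C)
    rw [neg_neg] at this
    exact this.symm
  set K : ℝ → ℝ := fun y => - Gf C (-y) with hK_def
  have hderiv : ∀ x ∈ Ici (-η), HasDerivAt K (gf C (-x)) x := by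
    intro x hx
    have hx' : -η ≤ x := hx
    have hx1 : -x < 1 := by linarith
    have h := Gf_hasDeriv hC0 hC1 hx1
    have h2 := h.comp x (hasDerivAt_neg x)
    have h3 := h2.neg
    refine h3.congr_deriv ?_
    ring
  have hnonneg : ∀ x ∈ Ioi (-η), 0 ≤ gf C (-x) := by
    intro x hx
    have hx' : -η < x := hx
    exact (gf_pos hC0 hC1 (by linarith : -x < 1)).le
  have htend : Tendsto K atTop (𝓝 0) := by
    have := (Gf_tendsto hC0 hC1).comp tendsto_neg_atTop_atBot
    simpa [hK_def, Function.comp] using this.neg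
  rw [hneg, integral_Ioi_of_hasDerivAt_of_nonneg' hderiv hnonneg htend]
  simp [hK_def]

end SdSAreaAux

theorem sds_area_E (C η : ℝ) (hC0 : 0 < C) (hC1 : C < 1) (hη : η < 1) :
    (∫ y in Set.Iic η, ∫ x in Set.Iic (-(1 / C) * Real.sqrt (2 * (1 - y))),
        (x ^ 2 + y ^ 2 - 1) ^ (-(3:ℝ)/2)) =
      (1 / Real.sqrt (1 - C ^ 2)) *
          artanh (Real.sqrt (1 - C ^ 2) / Real.sqrt (1 - C ^ 2 * (1 + η) / 2)) -
        artanh ((2 - C ^ 2 + 2 * Real.sqrt (1 - C ^ 2 * (1 + η) / 2)) /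
          (2 - C ^ 2 * η + 2 * Real.sqrt (1 - C ^ 2 * (1 + η) / 2))) := by
  open SdSAreaAux Set Filter Topology in
  have hae : ∀ᵐ (y : ℝ), y ∈ Set.Iic η →
      (∫ x in Set.Iic (-(1 / C) * Real.sqrt (2 * (1 - y))),
        (x ^ 2 + y ^ 2 - 1) ^ (-(3:ℝ)/2)) = SdSAreaAux.gf C y := by
    have hne : ∀ᵐ (y : ℝ), y ≠ (-1 : ℝ) := by
      rw [MeasureTheory.ae_iff]
      simp only [not_not, Set.setOf_eq_eq_singleton]
      exact Real.volume_singleton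
    filter_upwards [hne] with y hy1 hmem
    exact SdSAreaAux.inner_eq hC0 hC1 (lt_of_le_of_lt hmem hη) hy1
  rw [MeasureTheory.setIntegral_congr_ae measurableSet_Iic hae,
    SdSAreaAux.outer_int hC0 hC1 hη]
  -- final algebra
  open SdSAreaAux in
  set k := Real.sqrt (1 - C ^ 2) with hk_def
  set s := Real.sqrt (1 - C ^ 2 * (1 + η) / 2) with hs_def
  have hC2 : (0:ℝ) < 1 - C^2 := by nlinarith
  have hk0 : 0 < k := Real.sqrt_pos.2 hC2
  have hk2 : k^2 = 1 - C^2 := Real.sq_sqrt hC2.le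
  have hs0 : 0 < s := Real.sqrt_pos.2 (SdSAreaAux.arg_pos' hC0 hC1 hη)
  have hs2 : s^2 = 1 - C^2*(1+η)/2 := Real.sq_sqrt (SdSAreaAux.arg_pos' hC0 hC1 hη).le
  have hks : k < s := SdSAreaAux.k_lt_s hC0 hC1 hη
  have h1η : (0:ℝ) < 1 - η := by linarith
  have harg1 : (1 + k/s)/(1 - k/s) = (s+k)/(s-k) := by
    rw [div_eq_div_iff (by
        have : 0 < 1 - k/s := by
          rw [sub_pos, div_lt_one hs0]; exact hks
        exact this.ne') (sub_pos.2 hks).ne']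
    field_simp
  have hN : (0:ℝ) < 2 - C^2 + 2*s := by nlinarith
  have hD : (0:ℝ) < 2 - C^2*η + 2*s := by nlinarith [mul_pos (mul_pos hC0 hC0) h1η]
  have harg2 : (1 + (2 - C ^ 2 + 2 * s) / (2 - C ^ 2 * η + 2 * s)) /
      (1 - (2 - C ^ 2 + 2 * s) / (2 - C ^ 2 * η + 2 * s))
      = 2*(1+s)^2/(C^2*(1-η)) := by
    rw [div_eq_div_iff (by
        have h1 : 1 - (2 - C ^ 2 + 2 * s) / (2 - C ^ 2 * η + 2 * s)
            = (C^2*(1-η))/(2 - C ^ 2 * η + 2 * s) := by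
          field_simp
          ring
        rw [h1]
        positivity) (by positivity : C^2*(1-η) ≠ 0)]
    field_simp
    linear_combination (2*(2 - C ^ 2 * η + 2 * s)*C^2*(1-η) + (-6:ℝ)*C^2 + (-4:ℝ)*C^2*s + (6:ℝ)*C^2*η + (4:ℝ)*C^2*η*s + (2:ℝ)*C^4*η + (-2:ℝ)*C^4*η^2) * hs2
  unfold artanh
  rw [harg1, harg2]
  rw [Real.log_div (by positivity) (sub_pos.2 hks).ne',
    Real.log_div (by positivity) (by positivity : C^2*(1-η) ≠ 0),
    Real.log_mul (two_ne_zero) (by positivity),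
    Real.log_mul (by positivity) (by positivity : (1:ℝ)-η ≠ 0), Real.log_pow]
  simp only [SdSAreaAux.Gf, ← hk_def, ← hs_def]
  rw [show SdSAreaAux.sf C η = s from rfl]
  push_cast
  ring
end

section
/- Let 0 < C < 1 and ϑ > 1. In the Beltrami–Poincaré half-plane model, ∫₁^ϑ ∫_{−(C/√(1−C²))√(y²−1)}^{(C/√(1−C²))√(y²−1)} y^{−2} dx dy = (2C/√(1−C²))·( −√(ϑ²−1)/ϑ + artanh(√(ϑ²−1)/ϑ) ), and consequently (2C/√(1−C²))·ln ϑ minus this quantity tends to (2C/√(1−C²))·(1 − ln 2) as ϑ → +∞. (The first quantity is the hyperbolic area of the truncated h-elliptic parabolic disk Ě^C_ϑ = {(x,y) : ((1−C²)/C²)x² − y² + 1 ≤ 0, 1 ≤ y ≤ ϑ}, and (2C/√(1−C²)) ln ϑ is the hyperbolic area of Ď^C_ϑ = {(x,y) : ((1−C²)/C²)x² − y² ≤ 0, 1 ≤ y ≤ ϑ}.) -/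
open Filter

lemma my_sqrt_lt (y : ℝ) (hy : 1 ≤ y) : Real.sqrt (y^2-1) < y := by
  have h0 : (0:ℝ) < y := lt_of_lt_of_le one_pos hy
  have h := Real.sq_sqrt (by nlinarith : (0:ℝ) ≤ y^2-1)
  nlinarith [Real.sqrt_nonneg (y^2-1)]

lemma my_artanh_eq (y : ℝ) (hy : 1 ≤ y) :
    artanh (Real.sqrt (y^2-1)/y) = Real.log (y + Real.sqrt (y^2-1)) := by
  have h0 : (0:ℝ) < y := lt_of_lt_of_le one_pos hy
  set s := Real.sqrt (y^2-1) with hs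
  have hs2 : s^2 = y^2-1 := Real.sq_sqrt (by nlinarith)
  have hsy : s < y := my_sqrt_lt y hy
  have hden : 0 < 1 - s/y := by
    have : s/y < 1 := (div_lt_one h0).2 hsy
    linarith
  have h1 : (1 + s/y)/(1 - s/y) = (y+s)^2 := by
    rw [div_eq_iff (ne_of_gt hden)]
    field_simp
    nlinarith
  rw [artanh, h1, Real.log_pow]
  push_cast
  ring

lemma my_hasDerivAt (y : ℝ) (hy : 1 < y) :
    HasDerivAt (fun y : ℝ => -(Real.sqrt (y^2-1)/y) + Real.log (y + Real.sqrt (y^2-1)))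
      (Real.sqrt (y^2-1) / y^2) y := by
  have h0 : (0:ℝ) < y := lt_trans one_pos hy
  have hpos : 0 < y^2 - 1 := by nlinarith
  have hspos : 0 < Real.sqrt (y^2-1) := Real.sqrt_pos.2 hpos
  have hs2 : Real.sqrt (y^2-1)^2 = y^2-1 := Real.sq_sqrt hpos.le
  have hd1 : HasDerivAt (fun y : ℝ => y^2 - 1) (2*y) y := by
    simpa using ((hasDerivAt_pow 2 y).sub_const 1)
  have hds : HasDerivAt (fun y : ℝ => Real.sqrt (y^2-1)) (y / Real.sqrt (y^2-1)) y := by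
    have := (Real.hasDerivAt_sqrt (ne_of_gt hpos)).comp y hd1
    refine this.congr_deriv ?_
    field_simp
  have hdiv : HasDerivAt (fun y : ℝ => Real.sqrt (y^2-1)/y)
      ((y/Real.sqrt (y^2-1) * y - Real.sqrt (y^2-1) * 1)/y^2) y :=
    hds.div (hasDerivAt_id y) (ne_of_gt h0)
  have hadd : HasDerivAt (fun y : ℝ => y + Real.sqrt (y^2-1)) (1 + y/Real.sqrt (y^2-1)) y :=
    (hasDerivAt_id y).add hds
  have hne : y + Real.sqrt (y^2-1) ≠ 0 := by positivity
  have hlog : HasDerivAt (fun y : ℝ => Real.log (y + Real.sqrt (y^2-1)))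
      ((y + Real.sqrt (y^2-1))⁻¹ * (1 + y/Real.sqrt (y^2-1))) y :=
    HasDerivAt.comp (h₂ := Real.log) y (Real.hasDerivAt_log hne) hadd
  have := (hdiv.neg).add hlog
  refine this.congr_deriv ?_
  field_simp
  linear_combination (Real.sqrt (y^2-1) * y^2 * (y + Real.sqrt (y^2-1)) - y^2 * Real.sqrt (y^2-1)^2 - y^2 * (y^2-1) - y^3 * Real.sqrt (y^2-1) - y^2 + y^4) * hs2

lemma my_rpow (y : ℝ) (hy : 1 ≤ y) : (y:ℝ) ^ (-(2:ℝ)) = (y^2)⁻¹ := by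
  have h0 : (0:ℝ) < y := lt_of_lt_of_le one_pos hy
  rw [show (-(2:ℝ)) = ((-2:ℤ):ℝ) by norm_num, Real.rpow_intCast, zpow_neg]
  norm_cast

lemma my_ftc (ϑ : ℝ) (hϑ : 1 < ϑ) :
    (∫ y in (1:ℝ)..ϑ, Real.sqrt (y^2-1) / y^2) =
      -(Real.sqrt (ϑ^2-1)/ϑ) + Real.log (ϑ + Real.sqrt (ϑ^2-1)) := by
  have hsq : Continuous (fun y : ℝ => Real.sqrt (y^2-1)) := by continuity
  have hcont : ContinuousOn
      (fun y : ℝ => -(Real.sqrt (y^2-1)/y) + Real.log (y + Real.sqrt (y^2-1)))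
      (Set.Icc 1 ϑ) := by
    apply ContinuousOn.add
    · exact ((hsq.continuousOn.div continuousOn_id (fun y hy => by
        have h1 : (1:ℝ) ≤ y := hy.1
        simp only [id]
        positivity))).neg
    · apply ContinuousOn.log (continuousOn_id.add hsq.continuousOn)
      intro y hy
      have h1 : (1:ℝ) ≤ y := hy.1
      have := Real.sqrt_nonneg (y^2-1)
      simp only [Pi.add_apply, id]
      positivity
  have hint : IntervalIntegrable (fun y : ℝ => Real.sqrt (y^2-1) / y^2)
      MeasureTheory.volume 1 ϑ := by
    apply ContinuousOn.intervalIntegrable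
    apply ContinuousOn.div hsq.continuousOn
      (by continuity : Continuous (fun y:ℝ => y^2)).continuousOn
    intro y hy
    rw [Set.uIcc_of_le hϑ.le] at hy
    have h1 : (1:ℝ) ≤ y := hy.1
    positivity
  have := intervalIntegral.integral_eq_sub_of_hasDeriv_right_of_le hϑ.le hcont
    (fun x hx => (my_hasDerivAt x hx.1).hasDerivWithinAt) hint
  rw [this]
  norm_num

set_option maxHeartbeats 1000000 in
theorem bph_area_difference (C : ℝ) (hC0 : 0 < C) (hC1 : C < 1) :
    (∀ ϑ : ℝ, 1 < ϑ →
      (∫ y in (1:ℝ)..ϑ,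
          ∫ x in (-(C / Real.sqrt (1 - C ^ 2) * Real.sqrt (y ^ 2 - 1)))..(C / Real.sqrt (1 - C ^ 2) * Real.sqrt (y ^ 2 - 1)),
            (y:ℝ) ^ (-(2:ℝ))) =
        2 * C / Real.sqrt (1 - C ^ 2) *
          (-(Real.sqrt (ϑ ^ 2 - 1) / ϑ) + artanh (Real.sqrt (ϑ ^ 2 - 1) / ϑ))) ∧
    Tendsto (fun ϑ : ℝ =>
        2 * C / Real.sqrt (1 - C ^ 2) * Real.log ϑ -
          2 * C / Real.sqrt (1 - C ^ 2) *
            (-(Real.sqrt (ϑ ^ 2 - 1) / ϑ) + artanh (Real.sqrt (ϑ ^ 2 - 1) / ϑ)))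
      atTop (nhds (2 * C / Real.sqrt (1 - C ^ 2) * (1 - Real.log 2))) := by
  set k : ℝ := C / Real.sqrt (1 - C ^ 2) with hk
  constructor
  · intro ϑ hϑ
    have hcongr : ∀ y ∈ Set.uIcc (1:ℝ) ϑ,
        (∫ x in (-(k * Real.sqrt (y ^ 2 - 1)))..(k * Real.sqrt (y ^ 2 - 1)), (y:ℝ) ^ (-(2:ℝ)))
          = 2 * k * (Real.sqrt (y^2-1) / y^2) := by
      intro y hy
      rw [Set.uIcc_of_le hϑ.le] at hy
      have h1 : (1:ℝ) ≤ y := hy.1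
      rw [intervalIntegral.integral_const, my_rpow y h1, smul_eq_mul]
      have h0 : (0:ℝ) < y := lt_of_lt_of_le one_pos h1
      field_simp
      ring
    rw [intervalIntegral.integral_congr hcongr, intervalIntegral.integral_const_mul,
      my_ftc ϑ hϑ, my_artanh_eq ϑ hϑ.le]
    ring
  · have hu : Tendsto (fun ϑ : ℝ => Real.sqrt (ϑ^2-1)/ϑ) atTop (nhds 1) := by
      have h1 : Tendsto (fun ϑ : ℝ => (ϑ^2)⁻¹) atTop (nhds 0) :=
        (tendsto_pow_atTop (two_ne_zero)).inv_tendsto_atTop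
      have h2 : Tendsto (fun ϑ : ℝ => 1 - (ϑ^2)⁻¹) atTop (nhds 1) := by
        simpa using tendsto_const_nhds.sub h1
      have h3 : Tendsto (fun ϑ : ℝ => Real.sqrt (1 - (ϑ^2)⁻¹)) atTop (nhds 1) := by
        have := (Real.continuous_sqrt.continuousAt (x := (1:ℝ))).tendsto.comp h2
        simpa [Function.comp_def] using this
      apply h3.congr'
      filter_upwards [eventually_gt_atTop (1:ℝ)] with ϑ hϑ
      have h0 : (0:ℝ) < ϑ := lt_trans one_pos hϑ
      rw [show (1 - (ϑ^2)⁻¹) = (ϑ^2-1)/ϑ^2 by field_simp,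
        Real.sqrt_div (by nlinarith : (0:ℝ) ≤ ϑ^2-1) (ϑ^2),
        Real.sqrt_sq h0.le]
    have hg : Tendsto (fun ϑ : ℝ =>
        2 * k * (Real.sqrt (ϑ^2-1)/ϑ - Real.log (1 + Real.sqrt (ϑ^2-1)/ϑ)))
        atTop (nhds (2 * k * (1 - Real.log 2))) := by
      have hc : ContinuousAt (fun t : ℝ => 2 * k * (t - Real.log (1 + t))) 1 := by
        apply ContinuousAt.mul continuousAt_const
        apply ContinuousAt.sub continuousAt_id
        apply ContinuousAt.log (by fun_prop)
        norm_num
      have := hc.tendsto.comp hu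
      norm_num at this
      exact this
    have heq : (fun ϑ : ℝ =>
        2 * k * (Real.sqrt (ϑ^2-1)/ϑ - Real.log (1 + Real.sqrt (ϑ^2-1)/ϑ))) =ᶠ[atTop]
        (fun ϑ : ℝ =>
        2 * C / Real.sqrt (1 - C ^ 2) * Real.log ϑ -
          2 * C / Real.sqrt (1 - C ^ 2) *
            (-(Real.sqrt (ϑ ^ 2 - 1) / ϑ) + artanh (Real.sqrt (ϑ ^ 2 - 1) / ϑ))) := by
      filter_upwards [eventually_gt_atTop (1:ℝ)] with ϑ hϑ
      have h0 : (0:ℝ) < ϑ := lt_trans one_pos hϑ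
      have hs0 : 0 ≤ Real.sqrt (ϑ^2-1)/ϑ := by positivity
      have h1u : (0:ℝ) < 1 + Real.sqrt (ϑ^2-1)/ϑ := by linarith
      rw [my_artanh_eq ϑ hϑ.le,
        show ϑ + Real.sqrt (ϑ^2-1) = ϑ * (1 + Real.sqrt (ϑ^2-1)/ϑ) by field_simp,
        Real.log_mul h0.ne' h1u.ne']
      ring
    have := hg.congr' heq
    convert this using 2
    rw [hk]
    ring
end

section
/- Define β̂(C) = ln C − ln 2 + √(1−C²)·artanh √(1−C²) + C for C ∈ (0,1). Then β̂ is strictly increasing on (0,1), lim_{C→0⁺} β̂(C) = 0, and lim_{C→1⁻} β̂(C) = 1 − ln 2. -/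
open Filter

namespace BetahatAux

noncomputable def F (C : ℝ) : ℝ :=
  Real.log C - Real.log 2 + Real.sqrt (1 - C ^ 2) * artanh (Real.sqrt (1 - C ^ 2)) + C

lemma sqrt_facts {C : ℝ} (hC0 : 0 < C) (hC1 : C < 1) :
    0 < Real.sqrt (1 - C ^ 2) ∧ Real.sqrt (1 - C ^ 2) < 1 ∧
      Real.sqrt (1 - C ^ 2) ^ 2 = 1 - C ^ 2 := by
  have h1 : 0 < 1 - C ^ 2 := by nlinarith
  have hs0 : 0 < Real.sqrt (1 - C ^ 2) := Real.sqrt_pos.2 h1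
  have hs2 : Real.sqrt (1 - C ^ 2) ^ 2 = 1 - C ^ 2 := Real.sq_sqrt h1.le
  have hs1 : Real.sqrt (1 - C ^ 2) < 1 := by nlinarith
  exact ⟨hs0, hs1, hs2⟩

lemma hasDerivAt_F {C : ℝ} (hC0 : 0 < C) (hC1 : C < 1) :
    HasDerivAt F
      (1 - (C / Real.sqrt (1 - C ^ 2)) * artanh (Real.sqrt (1 - C ^ 2))) C := by
  obtain ⟨hs0, hs1, hs2⟩ := sqrt_facts hC0 hC1
  set s := Real.sqrt (1 - C ^ 2) with hsdef
  have h1 : (0:ℝ) < 1 - C ^ 2 := by nlinarith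
  have hinner : HasDerivAt (fun x : ℝ => 1 - x ^ 2) (-(2 * C)) C := by
    simpa using (hasDerivAt_pow 2 C).const_sub 1
  have hs' : HasDerivAt (fun x : ℝ => Real.sqrt (1 - x ^ 2)) (-(C / s)) C := by
    have h := (Real.hasDerivAt_sqrt h1.ne').comp C hinner
    refine h.congr_deriv ?_
    rw [← hsdef]
    field_simp
  have hp : HasDerivAt (fun x : ℝ => Real.log (1 + Real.sqrt (1 - x ^ 2)))
      ((1 + s)⁻¹ * (0 + -(C / s))) C :=
    (Real.hasDerivAt_log (by positivity)).comp C ((hasDerivAt_const C (1:ℝ)).add hs')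
  have hm : HasDerivAt (fun x : ℝ => Real.log (1 - Real.sqrt (1 - x ^ 2)))
      ((1 - s)⁻¹ * (0 - -(C / s))) C := by
    have hsub : HasDerivAt (fun x : ℝ => 1 - Real.sqrt (1 - x ^ 2)) (0 - -(C / s)) C :=
      (hasDerivAt_const C (1:ℝ)).sub hs'
    exact (Real.hasDerivAt_log (sub_pos.2 hs1).ne').comp C hsub
  have hG : HasDerivAt (fun x : ℝ => Real.log x - Real.log 2 +
      Real.sqrt (1 - x ^ 2) *
        ((Real.log (1 + Real.sqrt (1 - x ^ 2)) - Real.log (1 - Real.sqrt (1 - x ^ 2))) / 2) + x)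
      (C⁻¹ - 0 + (-(C / s) * ((Real.log (1 + s) - Real.log (1 - s)) / 2) +
        s * (((1 + s)⁻¹ * (0 + -(C / s)) - (1 - s)⁻¹ * (0 - -(C / s))) / 2)) + 1) C := by
    exact (((Real.hasDerivAt_log hC0.ne').sub (hasDerivAt_const C (Real.log 2))).add
      (hs'.mul ((hp.sub hm).div_const 2))).add (hasDerivAt_id C)
  have heq : F =ᶠ[nhds C] (fun x : ℝ => Real.log x - Real.log 2 +
      Real.sqrt (1 - x ^ 2) *
        ((Real.log (1 + Real.sqrt (1 - x ^ 2)) - Real.log (1 - Real.sqrt (1 - x ^ 2))) / 2) + x) := by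
    filter_upwards [Ioo_mem_nhds hC0 hC1] with x hx
    obtain ⟨hx0, hx1, hx2⟩ := sqrt_facts hx.1 hx.2
    unfold F artanh
    rw [Real.log_div (by positivity) (sub_pos.2 hx1).ne']
  have := hG.congr_of_eventuallyEq heq
  refine this.congr_deriv ?_
  unfold artanh
  rw [Real.log_div (by positivity) (sub_pos.2 hs1).ne']
  have hC : C ≠ 0 := hC0.ne'
  have h1s : (1:ℝ) + s ≠ 0 := by positivity
  have h2s : (1:ℝ) - s ≠ 0 := (sub_pos.2 hs1).ne'
  have key : s * (((1 + s)⁻¹ * (0 + -(C / s)) - (1 - s)⁻¹ * (0 - -(C / s))) / 2) = -C⁻¹ := by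
    field_simp
    ring_nf
    linear_combination (-2:ℝ) * hs2
  rw [key]
  ring

lemma deriv_pos {C : ℝ} (hC0 : 0 < C) (hC1 : C < 1) :
    0 < 1 - (C / Real.sqrt (1 - C ^ 2)) * artanh (Real.sqrt (1 - C ^ 2)) := by
  obtain ⟨hs0, hs1, hs2⟩ := sqrt_facts hC0 hC1
  set s := Real.sqrt (1 - C ^ 2) with hsdef
  have h2s : (0:ℝ) < 1 - s := by linarith
  have hv : (1 + s) / (1 - s) = (C / (1 - s)) ^ 2 := by
    rw [div_pow]
    rw [div_eq_div_iff h2s.ne' (by positivity)]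
    nlinarith [hs2]
  have hA : artanh s = Real.log (C / (1 - s)) := by
    unfold artanh
    rw [hv, Real.log_pow]
    push_cast
    ring
  have hApos : 0 < artanh s := by
    unfold artanh
    have : (1:ℝ) < (1 + s) / (1 - s) := by
      rw [lt_div_iff₀ h2s]; linarith
    have := Real.log_pos this
    linarith
  have hsinh : Real.sinh (artanh s) = s / C := by
    rw [hA, Real.sinh_log (by positivity)]
    rw [div_eq_div_iff (by norm_num) hC0.ne']
    field_simp
    nlinarith [hs2]
  have hlt : artanh s < s / C := by
    rw [← hsinh]
    exact Real.self_lt_sinh_iff.2 hApos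
  have : (C / s) * artanh s < 1 := by
    rw [div_mul_eq_mul_div, div_lt_one hs0]
    calc C * artanh s < C * (s / C) := by
          exact (mul_lt_mul_iff_right₀ hC0).2 hlt
      _ = s := by field_simp
  linarith

end BetahatAux

theorem betahat_properties (β : ℝ → ℝ)
    (hβ : ∀ C, β C = Real.log C - Real.log 2 +
      Real.sqrt (1 - C ^ 2) * artanh (Real.sqrt (1 - C ^ 2)) + C) :
    StrictMonoOn β (Set.Ioo 0 1) ∧
    Tendsto β (nhdsWithin 0 (Set.Ioi 0)) (nhds 0) ∧
    Tendsto β (nhdsWithin 1 (Set.Iio 1)) (nhds (1 - Real.log 2)) := by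
  have hB : β = BetahatAux.F := funext (fun C => by rw [hβ]; rfl)
  subst hB
  refine ⟨?_, ?_, ?_⟩
  · apply strictMonoOn_of_deriv_pos (convex_Ioo 0 1)
    · intro x hx
      exact (BetahatAux.hasDerivAt_F hx.1 hx.2).continuousAt.continuousWithinAt
    · intro x hx
      rw [interior_Ioo] at hx
      rw [(BetahatAux.hasDerivAt_F hx.1 hx.2).deriv]
      exact BetahatAux.deriv_pos hx.1 hx.2
  · -- limit at 0
    have hmem : Set.Ioo (0:ℝ) 1 ∈ nhdsWithin 0 (Set.Ioi 0) := Ioo_mem_nhdsGT one_pos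
    have heq : (fun C : ℝ => (Real.log C * C) * (C / (1 + Real.sqrt (1 - C ^ 2)))
        + Real.sqrt (1 - C ^ 2) * Real.log (1 + Real.sqrt (1 - C ^ 2)) - Real.log 2 + C)
        =ᶠ[nhdsWithin 0 (Set.Ioi 0)] BetahatAux.F := by
      filter_upwards [hmem] with x hx
      obtain ⟨hs0, hs1, hs2⟩ := BetahatAux.sqrt_facts hx.1 hx.2
      unfold BetahatAux.F artanh
      set s := Real.sqrt (1 - x ^ 2) with hsdef
      have h1s : (1:ℝ) + s ≠ 0 := by positivity
      have h2s : (0:ℝ) < 1 - s := by linarith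
      rw [Real.log_div (by positivity) h2s.ne']
      have hl : Real.log (1 - s) = 2 * Real.log x - Real.log (1 + s) := by
        have hx2 : 1 - s = x ^ 2 / (1 + s) := by
          rw [eq_div_iff h1s]; nlinarith
        rw [hx2, Real.log_div (pow_ne_zero 2 hx.1.ne') h1s, Real.log_pow]
        push_cast; ring
      rw [hl]
      field_simp
      ring_nf
      linear_combination ((2:ℝ) * Real.log x) * hs2
    refine Tendsto.congr' heq ?_
    have t1 : Tendsto (fun C : ℝ => Real.log C * C) (nhdsWithin 0 (Set.Ioi 0)) (nhds 0) :=
      (tendsto_log_mul_rpow_nhdsGT_zero one_pos).congr (fun x => by rw [Real.rpow_one])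
    have hcont2 : ContinuousAt (fun C : ℝ => C / (1 + Real.sqrt (1 - C ^ 2))) 0 := by
      apply ContinuousAt.div continuousAt_id
      · exact (continuous_const.add (Real.continuous_sqrt.comp (by continuity))).continuousAt
      · norm_num
    have t2 : Tendsto (fun C : ℝ => C / (1 + Real.sqrt (1 - C ^ 2)))
        (nhdsWithin 0 (Set.Ioi 0)) (nhds 0) := by
      have := hcont2.tendsto.mono_left
        (nhdsWithin_le_nhds : nhdsWithin (0:ℝ) (Set.Ioi 0) ≤ nhds 0)
      simpa using this
    have hcont3 : ContinuousAt
        (fun C : ℝ => Real.sqrt (1 - C ^ 2) * Real.log (1 + Real.sqrt (1 - C ^ 2))) 0 := by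
      have hsq : ContinuousAt (fun C : ℝ => Real.sqrt (1 - C ^ 2)) 0 :=
        (Real.continuous_sqrt.comp (by continuity)).continuousAt
      apply hsq.mul
      apply ContinuousAt.comp (g := Real.log) ?_ (continuousAt_const.add hsq)
      apply Real.continuousAt_log
      norm_num
    have t3 : Tendsto (fun C : ℝ => Real.sqrt (1 - C ^ 2) * Real.log (1 + Real.sqrt (1 - C ^ 2)))
        (nhdsWithin 0 (Set.Ioi 0)) (nhds (Real.log 2)) := by
      have := hcont3.tendsto.mono_left
        (nhdsWithin_le_nhds : nhdsWithin (0:ℝ) (Set.Ioi 0) ≤ nhds 0)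
      norm_num at this
      convert this using 2 <;> norm_num
    have tid : Tendsto (fun C : ℝ => C) (nhdsWithin 0 (Set.Ioi 0)) (nhds 0) :=
      Filter.tendsto_id.mono_right nhdsWithin_le_nhds
    have tc : Tendsto (fun _ : ℝ => Real.log 2) (nhdsWithin 0 (Set.Ioi 0)) (nhds (Real.log 2)) :=
      tendsto_const_nhds
    have := (((t1.mul t2).add t3).sub tc).add tid
    simpa using this
  · -- limit at 1
    have hsq : ContinuousAt (fun C : ℝ => Real.sqrt (1 - C ^ 2)) 1 :=
      (Real.continuous_sqrt.comp (by continuity)).continuousAt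
    have hval : Real.sqrt (1 - (1:ℝ) ^ 2) = 0 := by norm_num
    have hratio : ContinuousAt
        (fun C : ℝ => (1 + Real.sqrt (1 - C ^ 2)) / (1 - Real.sqrt (1 - C ^ 2))) 1 := by
      apply ContinuousAt.div (continuousAt_const.add hsq) (continuousAt_const.sub hsq)
      simp [hval]
    have hlog : ContinuousAt (fun C : ℝ =>
        Real.log ((1 + Real.sqrt (1 - C ^ 2)) / (1 - Real.sqrt (1 - C ^ 2)))) 1 := by
      apply ContinuousAt.comp (g := Real.log) ?_ hratio
      apply Real.continuousAt_log
      simp [hval]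
    have hc : ContinuousAt BetahatAux.F 1 := by
      unfold BetahatAux.F artanh
      exact (((Real.continuousAt_log one_ne_zero).sub continuousAt_const).add
        (hsq.mul (hlog.div_const 2))).add continuousAt_id
    have hF1 : BetahatAux.F 1 = 1 - Real.log 2 := by
      unfold BetahatAux.F artanh
      norm_num
      ring
    have := hc.tendsto.mono_left
      (nhdsWithin_le_nhds : nhdsWithin (1:ℝ) (Set.Iio 1) ≤ nhds 1)
    rw [hF1] at this
    exact this
end
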